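/- arXiv:1002.4350 — 5 statements merged into one kernel-verified Lean document; each statement's English description precedes it below -/
import Mathlib

section
/- Let (Γ,w) be a stable weighted graph of genus g ≥ 2 and d an integer. The map α : B̄_d(Γ,w) → B̄_d(Γ²,w²), defined by α(d)(c) = Σ_{v∈c} d(v) for each class c ∈ V², is surjective: every balanced multidegree of total degree d on (Γ²,w²) is of the form α(d) for some balanced multidegree d of total degree d on (Γ,w). -/
open Finset

noncomputable section
open scoped Classical

variable {V : Type} [Fintype V] [DecidableEq V]

/-- The simple graph underlying a multigraph with multiplicity function `k`:
`u` and `v` are adjacent iff `u ≠ v` and some edge joins them. -/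
def graphOf (k : V → V → ℕ) : SimpleGraph V where
  Adj u v := u ≠ v ∧ (0 < k u v ∨ 0 < k v u)
  symm := ⟨fun u v h => ⟨h.1.symm, h.2.symm⟩⟩
  loopless := ⟨fun v h => h.1 rfl⟩

/-- The number of edges of a multigraph: loops plus half the ordered count. -/
def numEdges (k : V → V → ℕ) : ℕ :=
  (∑ v, k v v) + (∑ u, ∑ v ∈ Finset.univ.erase u, k u v) / 2

/-- The genus of a weighted graph: `∑ w(v) + b₁`, with `b₁ = #E - #V + 1`. -/
def genus (k : V → V → ℕ) (w : V → ℕ) : ℤ :=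
  (∑ v, (w v : ℤ)) + ((numEdges k : ℤ) - (Fintype.card V : ℤ) + 1)

/-- Stability: connected, and each weight-zero vertex has valency at least 3. -/
def IsStable (k : V → V → ℕ) (w : V → ℕ) : Prop :=
  (graphOf k).Connected ∧
    ∀ v, w v = 0 → 3 ≤ 2 * k v v + ∑ u ∈ Finset.univ.erase v, k u v

/-- `δ_A`: the number of edges joining `A` to its complement. -/
def deltaA (k : V → V → ℕ) (A : Finset V) : ℤ :=
  ∑ u ∈ A, ∑ v ∈ Aᶜ, (k u v : ℤ)

/-- `w_A = Σ_{v∈A} (2w(v) − 2 + 2k(v,v) + Σ_{u≠v} k(u,v))`. -/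
def wA (k : V → V → ℕ) (w : V → ℕ) (A : Finset V) : ℤ :=
  ∑ v ∈ A, (2 * (w v : ℤ) - 2 + 2 * (k v v : ℤ) + ∑ u ∈ Finset.univ.erase v, (k u v : ℤ))

/-- `d_A`: the total degree of a multidegree on the subset `A`. -/
def degA (d : V → ℤ) (A : Finset V) : ℤ := ∑ v ∈ A, d v

/-- `m_A(d) = d·w_A/(2g−2) − δ_A/2 ∈ ℚ`. -/
def mA (k : V → V → ℕ) (w : V → ℕ) (D : ℤ) (A : Finset V) : ℚ :=
  (D : ℚ) * (wA k w A : ℚ) / ((2 * genus k w - 2 : ℤ) : ℚ) - (deltaA k A : ℚ) / 2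

/-- A balanced multidegree of total degree `D`. -/
def IsBalanced (k : V → V → ℕ) (w : V → ℕ) (D : ℤ) (d : V → ℤ) : Prop :=
  degA d Finset.univ = D ∧ ∀ A : Finset V, mA k w D A ≤ (degA d A : ℚ)

/-- A strictly balanced multidegree of total degree `D`. -/
def IsStrictlyBalanced (k : V → V → ℕ) (w : V → ℕ) (D : ℤ) (d : V → ℤ) : Prop :=
  IsBalanced k w D d ∧
    ∀ A : Finset V, A ≠ ∅ → A ≠ Finset.univ → mA k w D A < (degA d A : ℚ)

/-- `(Γ,w)` is `d`-general if every balanced multidegree of total degree `d`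
is strictly balanced. -/
def IsDGeneral (k : V → V → ℕ) (w : V → ℕ) (D : ℤ) : Prop :=
  ∀ d : V → ℤ, IsBalanced k w D d → IsStrictlyBalanced k w D d

/-- The generator `c_v` of the lattice `Λ`. -/
def cvec (k : V → V → ℕ) (v : V) : V → ℤ := fun u =>
  if u = v then -(∑ x ∈ Finset.univ.erase v, (k x v : ℤ)) else (k u v : ℤ)

/-- The lattice `Λ ⊆ ℤ^V` generated by the `c_v`. -/
def Lambda (k : V → V → ℕ) : AddSubgroup (V → ℤ) :=
  AddSubgroup.closure (Set.range (cvec k))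

/-- The total-degree homomorphism `ℤ^V → ℤ`. -/
def sumHom (V : Type) [Fintype V] : (V → ℤ) →+ ℤ :=
  { toFun := fun d => ∑ v, d v
    map_zero' := by simp
    map_add' := fun a b => by simp [Finset.sum_add_distrib] }

/-- `Z = {d ∈ ℤ^V : Σ_v d(v) = 0}`. -/
def Zsub (V : Type) [Fintype V] : AddSubgroup (V → ℤ) := (sumHom V).ker

/-- Remove the edge(s) joining `a` and `b` from the multigraph. -/
def removeEdge (k : V → V → ℕ) (a b : V) : V → V → ℕ := fun u v =>
  if (u = a ∧ v = b) ∨ (u = b ∧ v = a) then 0 else k u v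

/-- `a`–`b` is a bridge: a single non-loop edge whose removal disconnects the graph. -/
def IsBridge (k : V → V → ℕ) (a b : V) : Prop :=
  a ≠ b ∧ k a b = 1 ∧ ¬ (graphOf (removeEdge k a b)).Connected

/-- `A` induces a connected sub-multigraph. -/
def IsConnectedSubset (k : V → V → ℕ) (A : Finset V) : Prop :=
  ((graphOf k).induce (A : Set V)).Connected

/-- The equivalence relation `≈` on `V` generated by bridges. -/
def contractSetoid (k : V → V → ℕ) : Setoid V :=
  ⟨Relation.EqvGen (fun u v => IsBridge k u v), Relation.EqvGen.is_equivalence _⟩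

/-- The vertex set `V² = V/≈` of the contracted graph `Γ²`. -/
def V2 (k : V → V → ℕ) : Type := Quotient (contractSetoid k)

instance (k : V → V → ℕ) : Finite (V2 k) := Quotient.finite _

instance (k : V → V → ℕ) : Fintype (V2 k) := Fintype.ofFinite _

/-- The fiber of the quotient map `φ : V → V²` over a class `c`. -/
def fiber (k : V → V → ℕ) (c : V2 k) : Finset V :=
  Finset.univ.filter (fun v => Quotient.mk (contractSetoid k) v = c)

/-- The multiplicity function `k²` of the contracted graph `Γ²`. -/
def k2 (k : V → V → ℕ) : V2 k → V2 k → ℕ := fun c c' =>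
  if c = c' then
    (∑ v ∈ fiber k c, k v v) +
      (∑ u ∈ fiber k c, ∑ v ∈ (fiber k c).erase u,
        if IsBridge k u v then 0 else k u v) / 2
  else ∑ u ∈ fiber k c, ∑ v ∈ fiber k c', k u v

/-- The weight function `w²` of the contracted weighted graph `(Γ²,w²)`. -/
def w2 (k : V → V → ℕ) (w : V → ℕ) : V2 k → ℕ := fun c => ∑ v ∈ fiber k c, w v

/-- The pushforward `α(d)` of a multidegree to the contracted graph. -/
def alphaMap (k : V → V → ℕ) (d : V → ℤ) : V2 k → ℤ := fun c => ∑ v ∈ fiber k c, d v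

/-- The setoid on multidegrees of total degree `D`: two are equivalent if their
difference lies in `Λ`; the quotient is `Δ^d`. -/
def degSetoid (k : V → V → ℕ) (D : ℤ) : Setoid {d : V → ℤ // (∑ v, d v) = D} :=
  ⟨fun a b => (a : V → ℤ) - (b : V → ℤ) ∈ Lambda k, by
    constructor
    · intro a; simpa using (Lambda k).zero_mem
    · intro a b h; have h2 := (Lambda k).neg_mem h; rwa [neg_sub] at h2
    · intro a b c h1 h2
      have h3 := (Lambda k).add_mem h1 h2
      rwa [sub_add_sub_cancel] at h3⟩

/-- Number of edges of the sub-multigraph induced on `A`. -/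
def numEdgesIn (k : V → V → ℕ) (A : Finset V) : ℕ :=
  (∑ v ∈ A, k v v) + (∑ u ∈ A, ∑ v ∈ A.erase u, k u v) / 2

/-- Blow-up of a multigraph at the single bridge `a`–`b`: one exceptional
vertex is inserted in the middle of the bridge. -/
def blowK (k : V → V → ℕ) (a b : V) : (V ⊕ Unit) → (V ⊕ Unit) → ℕ
  | Sum.inl u, Sum.inl v => if (u = a ∧ v = b) ∨ (u = b ∧ v = a) then 0 else k u v
  | Sum.inl u, Sum.inr _ => if u = a ∨ u = b then 1 else 0
  | Sum.inr _, Sum.inl v => if v = a ∨ v = b then 1 else 0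
  | Sum.inr _, Sum.inr _ => 0

/-- Weight function of the blow-up at one bridge: exceptional vertex has weight 0. -/
def blowW (w : V → ℕ) : V ⊕ Unit → ℕ
  | Sum.inl v => w v
  | Sum.inr _ => 0

/-- Blow-up of a multigraph at a set `S` of bridges (given as ordered pairs):
one exceptional vertex is inserted in the middle of each bridge of `S`. -/
def blowKS (k : V → V → ℕ) (S : Finset (V × V)) :
    (V ⊕ {p : V × V // p ∈ S}) → (V ⊕ {p : V × V // p ∈ S}) → ℕ
  | Sum.inl u, Sum.inl v => if (u, v) ∈ S ∨ (v, u) ∈ S then 0 else k u v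
  | Sum.inl u, Sum.inr e => if u = e.1.1 ∨ u = e.1.2 then 1 else 0
  | Sum.inr e, Sum.inl v => if v = e.1.1 ∨ v = e.1.2 then 1 else 0
  | Sum.inr _, Sum.inr _ => 0

/-- Weight function of the blow-up at a set of bridges. -/
def blowWS (w : V → ℕ) (S : Finset (V × V)) : (V ⊕ {p : V × V // p ∈ S}) → ℕ
  | Sum.inl v => w v
  | Sum.inr _ => 0

/-- Strictly balanced multidegree of total degree `D` on the blow-up `Γ̂_S`:
balanced (with degree 1 on each exceptional vertex), and the inequality is
strict for every proper nonempty `A` such that some edge between `A` and its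
complement has no exceptional endpoint. -/
def IsStrictlyBalancedBlowS (k : V → V → ℕ) (w : V → ℕ) (S : Finset (V × V)) (D : ℤ)
    (dh : (V ⊕ {p : V × V // p ∈ S}) → ℤ) : Prop :=
  IsBalanced (blowKS k S) (blowWS w S) D dh ∧
    (∀ e : {p : V × V // p ∈ S}, dh (Sum.inr e) = 1) ∧
    ∀ A : Finset (V ⊕ {p : V × V // p ∈ S}), A ≠ ∅ → A ≠ Finset.univ →
      (∃ u v : V, Sum.inl u ∈ A ∧ Sum.inl v ∉ A ∧ 0 < blowKS k S (Sum.inl u) (Sum.inl v)) →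
      mA (blowKS k S) (blowWS w S) D A < (degA dh A : ℚ)

/-- Multiplicity function of the vine graph: two vertices joined by `δ` edges,
no loops. -/
def vineK (δ : ℕ) : Fin 2 → Fin 2 → ℕ := fun u v => if u = v then 0 else δ

/-- Weight function of the vine graph with weights `g₁, g₂`. -/
def vineW (g1 g2 : ℕ) : Fin 2 → ℕ := fun v => if v = 0 then g1 else g2

/-- The data of a stable vine graph of genus `g` with weights `g₁, g₂` and `δ` edges. -/
def StableVine (g : ℤ) (g1 g2 δ : ℕ) : Prop :=
  2 ≤ δ ∧ ((g1 = 0 ∨ g2 = 0) → 3 ≤ δ) ∧ (g1 : ℤ) + (g2 : ℤ) + (δ : ℤ) - 1 = g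

/-! ### Auxiliary development for Statement 9 -/

namespace Stmt9Aux

variable {V : Type} [Fintype V] [DecidableEq V]

lemma double_sum_eq (s : Finset V) (f : V → V → ℕ) :
    ∑ u ∈ s, ∑ v ∈ s.erase u, f u v
      = ∑ p ∈ (s ×ˢ s).filter (fun p => p.1 ≠ p.2), f p.1 p.2 := by
  rw [Finset.sum_filter, Finset.sum_product]
  refine Finset.sum_congr rfl fun u hu => ?_
  rw [← Finset.sum_filter]
  congr 1
  ext v
  simp only [Finset.mem_erase, Finset.mem_filter]
  exact ⟨fun h => ⟨h.2, fun e => h.1 e.symm⟩, fun h => ⟨fun e => h.2 e.symm, h.1⟩⟩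

lemma even_sym_sum (s : Finset V) (f : V → V → ℕ) (hf : ∀ u v, f u v = f v u) :
    2 * ((∑ u ∈ s, ∑ v ∈ s.erase u, f u v) / 2) = ∑ u ∈ s, ∑ v ∈ s.erase u, f u v := by
  have key : Even (∑ u ∈ s, ∑ v ∈ s.erase u, f u v) := by
    rw [double_sum_eq]
    set ι := Fintype.equivFin V with hι
    have hsplit := Finset.sum_filter_add_sum_filter_not
      ((s ×ˢ s).filter (fun p => p.1 ≠ p.2)) (fun p => ι p.1 < ι p.2) (fun p => f p.1 p.2)
    have hswap : ∑ p ∈ ((s ×ˢ s).filter (fun p => p.1 ≠ p.2)).filter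
          (fun p => ¬ ι p.1 < ι p.2), f p.1 p.2
        = ∑ p ∈ ((s ×ˢ s).filter (fun p => p.1 ≠ p.2)).filter
          (fun p => ι p.1 < ι p.2), f p.1 p.2 := by
      refine Finset.sum_nbij' (fun p => Prod.swap p) (fun p => Prod.swap p) ?_ ?_ ?_ ?_ ?_
      · intro a ha
        simp only [Finset.mem_filter, Finset.mem_product] at ha ⊢
        refine ⟨⟨⟨ha.1.1.2, ha.1.1.1⟩, fun e => ha.1.2 e.symm⟩, ?_⟩
        have hne : ι a.1 ≠ ι a.2 := fun h => ha.1.2 (ι.injective h)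
        show ι a.2 < ι a.1
        exact lt_of_le_of_ne (not_lt.1 ha.2) hne.symm
      · intro a ha
        simp only [Finset.mem_filter, Finset.mem_product] at ha ⊢
        exact ⟨⟨⟨ha.1.1.2, ha.1.1.1⟩, fun e => ha.1.2 e.symm⟩, fun h => absurd ha.2 (not_lt.2 h.le)⟩
      · intro a _; rfl
      · intro a _; rfl
      · intro a _; exact hf a.1 a.2
    refine ⟨∑ p ∈ ((s ×ˢ s).filter (fun p => p.1 ≠ p.2)).filter
      (fun p => ι p.1 < ι p.2), f p.1 p.2, ?_⟩
    rw [← hsplit, hswap]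
  exact Nat.mul_div_cancel' key.two_dvd

section Graph

variable (k : V → V → ℕ)

lemma removeEdge_comm (a b : V) : removeEdge k a b = removeEdge k b a := by
  funext u v
  simp only [removeEdge]
  congr 1
  · exact propext or_comm


lemma removeEdge_pos {a b u v : V} (h : 0 < removeEdge k a b u v) : 0 < k u v := by
  by_cases hc : (u = a ∧ v = b) ∨ (u = b ∧ v = a)
  · simp [removeEdge, hc] at h
  · simpa [removeEdge, hc] using h

variable {k}

lemma bridge_symm (hsym : ∀ u v, k u v = k v u) {a b : V} (h : IsBridge k a b) :
    IsBridge k b a :=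
  ⟨h.1.symm, by rw [hsym b a]; exact h.2.1, by rw [← removeEdge_comm]; exact h.2.2⟩

/-- The side of the bridge `x–y` containing `y`. -/
def Sside (k : V → V → ℕ) (x y : V) : Finset V :=
  Finset.univ.filter fun v => (graphOf (removeEdge k x y)).Reachable y v

lemma mem_Sside {x y v : V} :
    v ∈ Sside k x y ↔ (graphOf (removeEdge k x y)).Reachable y v := by
  simp [Sside]

variable (hconn : (graphOf k).Connected) {x y : V} (hb : IsBridge k x y)

include hconn hb

lemma reach_total (v : V) :
    (graphOf (removeEdge k x y)).Reachable y v ∨ (graphOf (removeEdge k x y)).Reachable x v := by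
  have hr : (graphOf k).Reachable y v := hconn.preconnected y v
  rw [SimpleGraph.reachable_iff_reflTransGen] at hr
  induction hr with
  | refl => exact Or.inl (SimpleGraph.Reachable.refl _)
  | tail _ hbc ih =>
    rename_i b c _
    by_cases hc : (b = x ∧ c = y) ∨ (b = y ∧ c = x)
    · rcases hc with ⟨_, rfl⟩ | ⟨_, rfl⟩
      · exact Or.inl (SimpleGraph.Reachable.refl _)
      · exact Or.inr (SimpleGraph.Reachable.refl _)
    · have hadj : (graphOf (removeEdge k x y)).Adj b c := by
        refine ⟨hbc.1, ?_⟩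
        have h1 : removeEdge k x y b c = k b c := by simp [removeEdge, hc]
        have h2 : removeEdge k x y c b = k c b := by
          have : ¬ ((c = x ∧ b = y) ∨ (c = y ∧ b = x)) := by tauto
          simp [removeEdge, this]
        rw [h1, h2]
        exact hbc.2
      rcases ih with h | h
      · exact Or.inl (h.trans hadj.reachable)
      · exact Or.inr (h.trans hadj.reachable)

lemma not_reach_bridge : ¬ (graphOf (removeEdge k x y)).Reachable y x := by
  intro h
  apply hb.2.2
  have : Nonempty V := ⟨x⟩
  refine ⟨fun u v => ?_⟩
  have hu := reach_total hconn hb u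
  have hv := reach_total hconn hb v
  have hyu : (graphOf (removeEdge k x y)).Reachable y u := by
    rcases hu with h' | h'
    · exact h'
    · exact h.trans h'
  have hyv : (graphOf (removeEdge k x y)).Reachable y v := by
    rcases hv with h' | h'
    · exact h'
    · exact h.trans h'
  exact hyu.symm.trans hyv

lemma y_mem_Sside : y ∈ Sside k x y := mem_Sside.2 (SimpleGraph.Reachable.refl _)

lemma x_notmem_Sside : x ∉ Sside k x y := fun h => not_reach_bridge hconn hb (mem_Sside.1 h)

lemma Sside_swap : Sside k y x = (Sside k x y)ᶜ := by
  ext v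
  rw [Finset.mem_compl, mem_Sside, mem_Sside, ← removeEdge_comm]
  constructor
  · intro h1 h2
    exact not_reach_bridge hconn hb (h2.trans h1.symm)
  · intro h1
    rcases reach_total hconn hb v with h | h
    · exact absurd h h1
    · exact h

lemma Sside_crossing {u v : V} (hu : u ∈ Sside k x y) (hv : v ∉ Sside k x y)
    (hk : 0 < k u v) : u = y ∧ v = x := by
  have hne : u ≠ v := fun h => hv (h ▸ hu)
  by_cases hc : (u = x ∧ v = y) ∨ (u = y ∧ v = x)
  · rcases hc with ⟨rfl, rfl⟩ | h
    · exact absurd hu (x_notmem_Sside hconn hb)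
    · exact h
  · exfalso
    have hadj : (graphOf (removeEdge k x y)).Adj u v := by
      refine ⟨hne, Or.inl ?_⟩
      have h1 : removeEdge k x y u v = k u v := by simp [removeEdge, hc]
      rw [h1]; exact hk
    exact hv (mem_Sside.2 ((mem_Sside.1 hu).trans hadj.reachable))

lemma Sside_crossing' (hsym : ∀ u v, k u v = k v u) {u v : V} (hu : u ∉ Sside k x y)
    (hv : v ∈ Sside k x y) (hk : 0 < k u v) : u = x ∧ v = y := by
  have := Sside_crossing hconn hb hv hu (by rw [hsym v u]; exact hk)
  exact ⟨this.2, this.1⟩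

lemma deltaA_Sside (hsym : ∀ u v, k u v = k v u) : deltaA k (Sside k x y) = 1 := by
  unfold deltaA
  rw [Finset.sum_eq_single y]
  · rw [Finset.sum_eq_single x]
    · rw [hsym y x, hb.2.1]; rfl
    · intro v hv hvx
      rw [Finset.mem_compl] at hv
      have : k y v = 0 := by
        by_contra h
        exact hvx (Sside_crossing hconn hb (y_mem_Sside hconn hb) hv (Nat.pos_of_ne_zero h)).2
      simp [this]
    · intro hx
      exact absurd (Finset.mem_compl.2 (x_notmem_Sside hconn hb)) hx
  · intro u hu huy
    apply Finset.sum_eq_zero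
    intro v hv
    rw [Finset.mem_compl] at hv
    have : k u v = 0 := by
      by_contra h
      exact huy (Sside_crossing hconn hb hu hv (Nat.pos_of_ne_zero h)).1
    simp [this]
  · intro hy
    exact absurd (y_mem_Sside hconn hb) hy

end Graph

end Stmt9Aux

namespace Stmt9Aux

variable {V : Type} [Fintype V] [DecidableEq V]

section Classes

variable (k : V → V → ℕ)

/-- The quotient map `φ : V → V²`. -/
def phi (v : V) : V2 k := Quotient.mk (contractSetoid k) v

variable {k}

lemma phi_eq_of_eqvGen {a b : V} (h : Relation.EqvGen (fun u v => IsBridge k u v) a b) :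
    phi k a = phi k b := Quotient.sound h

lemma eqvGen_of_phi_eq {a b : V} (h : phi k a = phi k b) :
    Relation.EqvGen (fun u v => IsBridge k u v) a b := Quotient.exact h

lemma phi_bridge {a b : V} (h : IsBridge k a b) : phi k a = phi k b :=
  phi_eq_of_eqvGen (Relation.EqvGen.rel a b h)

lemma mem_fiber {c : V2 k} {v : V} : v ∈ fiber k c ↔ phi k v = c := by
  simp [fiber, phi]
  exact Iff.rfl

lemma phi_mem_fiber (v : V) : v ∈ fiber k (phi k v) := mem_fiber.2 rfl

lemma out_mem_fiber (c : V2 k) : Quotient.out c ∈ fiber k c := mem_fiber.2 (Quotient.out_eq c)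

lemma class_side (hconn : (graphOf k).Connected) {x y : V} (hb : IsBridge k x y)
    {u v : V} (h : phi k u = phi k v) :
    (u ∈ Sside k x y ↔ v ∈ Sside k x y) ∨ phi k u = phi k x := by
  have h' := eqvGen_of_phi_eq h
  clear h
  induction h' with
  | rel a b hab =>
    by_cases hc : (a = x ∧ b = y) ∨ (a = y ∧ b = x)
    · rcases hc with ⟨rfl, rfl⟩ | ⟨rfl, rfl⟩
      · exact Or.inr rfl
      · exact Or.inr (phi_bridge hb).symm
    · left
      have hadj : (graphOf (removeEdge k x y)).Adj a b := by
        refine ⟨hab.1, Or.inl ?_⟩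
        have h1 : removeEdge k x y a b = k a b := by simp [removeEdge, hc]
        rw [h1, hab.2.1]; norm_num
      rw [mem_Sside, mem_Sside]
      exact ⟨fun hr => hr.trans hadj.reachable, fun hr => hr.trans hadj.symm.reachable⟩
  | refl a => exact Or.inl Iff.rfl
  | symm a b hab ih =>
    rcases ih with h1 | h1
    · exact Or.inl h1.symm
    · exact Or.inr ((phi_eq_of_eqvGen hab).symm.trans h1)
  | trans a b c hab _ ih1 ih2 =>
    rcases ih1 with h1 | h1
    · rcases ih2 with h2 | h2
      · exact Or.inl (h1.trans h2)
      · exact Or.inr ((phi_eq_of_eqvGen hab).trans h2)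
    · exact Or.inr h1

lemma crossing_bridge_of (hsym : ∀ u v, k u v = k v u) {A : Finset V} {u v : V}
    (h : Relation.EqvGen (fun a b => IsBridge k a b) u v) :
    (u ∈ A ↔ v ∈ A) ∨ ∃ p q, IsBridge k p q ∧ p ∈ A ∧ q ∉ A := by
  induction h with
  | rel a b hab =>
    by_cases ha : a ∈ A <;> by_cases hb' : b ∈ A
    · exact Or.inl (iff_of_true ha hb')
    · exact Or.inr ⟨a, b, hab, ha, hb'⟩
    · exact Or.inr ⟨b, a, bridge_symm hsym hab, hb', ha⟩
    · exact Or.inl (iff_of_false ha hb')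
  | refl a => exact Or.inl Iff.rfl
  | symm a b _ ih =>
    rcases ih with h1 | h1
    · exact Or.inl h1.symm
    · exact Or.inr h1
  | trans a b c _ _ ih1 ih2 =>
    rcases ih1 with h1 | h1
    · rcases ih2 with h2 | h2
      · exact Or.inl (h1.trans h2)
      · exact Or.inr h2
    · exact Or.inr h1

/-- The union of the fibers over `B ⊆ V²`, i.e. `φ⁻¹(B)`. -/
def hatF (k : V → V → ℕ) (B : Finset (V2 k)) : Finset V :=
  Finset.univ.filter fun v => phi k v ∈ B

lemma mem_hatF {B : Finset (V2 k)} {v : V} : v ∈ hatF k B ↔ phi k v ∈ B := by simp [hatF]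

lemma hatF_eq_biUnion (B : Finset (V2 k)) : hatF k B = B.biUnion (fun c => fiber k c) := by
  ext v
  simp only [mem_hatF, Finset.mem_biUnion]
  constructor
  · intro h; exact ⟨phi k v, h, phi_mem_fiber v⟩
  · rintro ⟨c, hc, hvc⟩; rwa [mem_fiber.1 hvc]

lemma fibers_pairwiseDisjoint (B : Finset (V2 k)) :
    (↑B : Set (V2 k)).PairwiseDisjoint (fiber k) := by
  intro c1 _ c2 _ hne
  refine Finset.disjoint_left.2 fun v hv1 hv2 => hne ?_
  rw [← mem_fiber.1 hv1, ← mem_fiber.1 hv2]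

lemma sum_hatF {M : Type} [AddCommMonoid M] (B : Finset (V2 k)) (g : V → M) :
    ∑ v ∈ hatF k B, g v = ∑ c ∈ B, ∑ v ∈ fiber k c, g v := by
  rw [hatF_eq_biUnion, Finset.sum_biUnion (fibers_pairwiseDisjoint B)]

lemma hatF_compl (B : Finset (V2 k)) : hatF k Bᶜ = (hatF k B)ᶜ := by
  ext v; simp [mem_hatF]

lemma hatF_univ : hatF k (Finset.univ : Finset (V2 k)) = Finset.univ := by
  ext v; simp [mem_hatF]

lemma sum_fiber {M : Type} [AddCommMonoid M] (g : V → M) :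
    ∑ c : V2 k, ∑ v ∈ fiber k c, g v = ∑ v, g v := by
  rw [← sum_hatF Finset.univ g, hatF_univ]

end Classes

section Forest

variable {k : V → V → ℕ}

/-- The simple graph of bridges. -/
def BG (k : V → V → ℕ) : SimpleGraph V where
  Adj u v := IsBridge k u v ∧ IsBridge k v u
  symm := ⟨fun u v h => ⟨h.2, h.1⟩⟩
  loopless := ⟨fun v h => h.1.1 rfl⟩

lemma BG_adj (hsym : ∀ u v, k u v = k v u) {u v : V} :
    (BG k).Adj u v ↔ IsBridge k u v :=
  ⟨fun h => h.1, fun h => ⟨h, bridge_symm hsym h⟩⟩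

lemma BG_acyclic (hconn : (graphOf k).Connected) : (BG k).IsAcyclic := by
  intro v c hc
  cases c with
  | nil => exact hc.ne_nil rfl
  | cons hadj p =>
    rename_i u
    have hb : IsBridge k v u := hadj.1
    have hedges : s(v, u) ∉ p.edges := by
      have h1 := hc.edges_nodup
      rw [SimpleGraph.Walk.edges_cons] at h1
      exact (List.nodup_cons.mp h1).1
    have hp' := p.toDeleteEdges {s(v, u)} (fun e he h' => hedges ((Set.mem_singleton_iff.1 h') ▸ he))
    have hle : (BG k).deleteEdges {s(v, u)} ≤ graphOf (removeEdge k v u) := by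
      intro a b hab
      rw [SimpleGraph.deleteEdges_adj] at hab
      refine ⟨hab.1.1.1, Or.inl ?_⟩
      have hcnd : ¬ ((a = v ∧ b = u) ∨ (a = u ∧ b = v)) := by
        intro hh
        exact hab.2 (Set.mem_singleton_iff.2 (Sym2.eq_iff.2 (by tauto)))
      have h2 : removeEdge k v u a b = k a b := by simp [removeEdge, hcnd]
      rw [h2, hab.1.1.2.1]
      norm_num
    exact not_reach_bridge hconn hb (SimpleGraph.Reachable.mono hle ⟨hp'⟩)

lemma phi_eq_iff_reach (hsym : ∀ u v, k u v = k v u) {u v : V} :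
    phi k u = phi k v ↔ (BG k).Reachable u v := by
  rw [SimpleGraph.reachable_iff_reflTransGen]
  constructor
  · intro h
    have h' := eqvGen_of_phi_eq h
    clear h
    induction h' with
    | rel a b hab => exact Relation.ReflTransGen.single ⟨hab, bridge_symm hsym hab⟩
    | refl a => exact Relation.ReflTransGen.refl
    | symm a b _ ih => haveI := (BG k).symm; exact Std.Symm.symm _ _ ih
    | trans a b c _ _ ih1 ih2 => exact ih1.trans ih2
  · intro h
    induction h with
    | refl => rfl
    | tail _ hadj ih => exact ih.trans (phi_bridge hadj.1)

/-- The bridge graph induced on a fiber (as a graph on the finset subtype). -/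
def IG (k : V → V → ℕ) (c : V2 k) : SimpleGraph {x // x ∈ fiber k c} :=
  (BG k).comap Subtype.val

lemma IG_tree (hconn : (graphOf k).Connected) (hsym : ∀ u v, k u v = k v u) (c : V2 k) :
    (IG k c).IsTree := by
  constructor
  · have : Nonempty {x // x ∈ fiber k c} := ⟨⟨Quotient.out c, out_mem_fiber c⟩⟩
    refine ⟨fun a b => ?_⟩
    have hab : phi k (a : V) = phi k (b : V) := by
      rw [mem_fiber.1 a.2, mem_fiber.1 b.2]
    have hr := (phi_eq_iff_reach hsym).1 hab
    rw [SimpleGraph.reachable_iff_reflTransGen] at hr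
    have key : ∀ {u w : V}, Relation.ReflTransGen (BG k).Adj u w →
        ∀ (hu : u ∈ fiber k c) (hw : w ∈ fiber k c),
        (IG k c).Reachable ⟨u, hu⟩ ⟨w, hw⟩ := by
      intro u w h
      induction h with
      | refl => intro hu hw; exact SimpleGraph.Reachable.refl _
      | @tail b' w' _ hadj ih =>
        intro hu hw
        have hb' : b' ∈ fiber k c := by
          rw [mem_fiber] at hw ⊢
          rw [← hw]
          exact phi_bridge hadj.1
        refine (ih hu hb').trans (SimpleGraph.Adj.reachable ?_)
        exact hadj
    have := key hr a.2 b.2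
    simpa using this
  · intro v p hp
    have hemb : (IG k c) ↪g (BG k) :=
      SimpleGraph.Embedding.comap (Function.Embedding.subtype _) (BG k)
    exact BG_acyclic hconn (p.map hemb.toHom)
      ((SimpleGraph.Walk.map_isCycle_iff_of_injective hemb.injective).2 hp)

lemma fiber_edge_count (hconn : (graphOf k).Connected) (hsym : ∀ u v, k u v = k v u)
    (c : V2 k) :
    (∑ u ∈ fiber k c, ∑ v ∈ (fiber k c).erase u, if IsBridge k u v then k u v else 0) + 2
      = 2 * (fiber k c).card := by
  classical
  have htree := IG_tree hconn hsym c
  have hcard := htree.card_edgeFinset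
  have hdeg := SimpleGraph.sum_degrees_eq_twice_card_edges (IG k c)
  have hstep : ∀ (u : {x // x ∈ fiber k c}), (IG k c).degree u
      = ∑ v ∈ (fiber k c).erase (u : V), if IsBridge k (u : V) v then k (u : V) v else 0 := by
    intro u
    have hsum : (∑ v ∈ (fiber k c).erase (u : V), if IsBridge k (u : V) v then k (u : V) v else 0)
        = (((fiber k c).erase (u : V)).filter (fun v => IsBridge k (u : V) v)).card := by
      rw [Finset.sum_ite, Finset.sum_const_zero, add_zero]
      rw [Finset.card_eq_sum_ones]
      refine Finset.sum_congr rfl fun v hv => ?_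
      exact (Finset.mem_filter.1 hv).2.2.1
    rw [hsum, SimpleGraph.degree]
    refine Finset.card_nbij Subtype.val ?_ ?_ ?_
    · intro w hw
      rw [Finset.mem_coe, SimpleGraph.mem_neighborFinset] at hw
      have hadj : (BG k).Adj (u : V) (w : V) := hw
      refine Finset.mem_filter.2 ⟨Finset.mem_erase.2 ⟨fun h => hadj.1.1 h.symm, w.2⟩, hadj.1⟩
    · intro a _ b _ hab
      exact Subtype.ext hab
    · intro v hv
      rw [Finset.coe_filter] at hv
      obtain ⟨hv1, hv2⟩ := hv
      have hvf : v ∈ fiber k c := (Finset.mem_erase.1 hv1).2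
      refine ⟨⟨v, hvf⟩, ?_, rfl⟩
      rw [Finset.mem_coe]
      show ⟨v, hvf⟩ ∈ (IG k c).neighborFinset u
      rw [SimpleGraph.mem_neighborFinset]
      exact ⟨hv2, bridge_symm hsym hv2⟩
  have h1 : ∑ u ∈ fiber k c, ∑ v ∈ (fiber k c).erase u, (if IsBridge k u v then k u v else 0)
      = ∑ u : {x // x ∈ fiber k c}, (IG k c).degree u := by
    rw [← Finset.sum_coe_sort (fiber k c)]
    exact Finset.sum_congr rfl fun u _ => (hstep u).symm
  rw [h1, hdeg]
  have h2 : Fintype.card {x // x ∈ fiber k c} = (fiber k c).card := Fintype.card_coe _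
  omega

end Forest

end Stmt9Aux

namespace Stmt9Aux

variable {V : Type} [Fintype V] [DecidableEq V]

section Sat

variable {k : V → V → ℕ}

lemma hatF_singleton (c : V2 k) : hatF k {c} = fiber k c := by
  ext v; simp [mem_hatF, mem_fiber]

lemma sum_erase_split {M : Type} [AddCommMonoid M] (F : Finset V) {v : V} (hv : v ∈ F)
    (g : V → M) :
    ∑ u ∈ Finset.univ.erase v, g u = (∑ u ∈ F.erase v, g u) + ∑ u ∈ Fᶜ, g u := by
  have hdisj : Disjoint (F.erase v) Fᶜ :=
    Finset.disjoint_left.2 fun u hu hc => (Finset.mem_compl.1 hc) (Finset.mem_of_mem_erase hu)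
  rw [← Finset.sum_union hdisj]
  apply Finset.sum_congr _ (fun _ _ => rfl)
  ext u
  simp only [Finset.mem_erase, Finset.mem_union, Finset.mem_compl, Finset.mem_univ, and_true]
  constructor
  · intro hne
    by_cases hu : u ∈ F
    · exact Or.inl ⟨hne, hu⟩
    · exact Or.inr hu
  · rintro (⟨hne, _⟩ | hu)
    · exact hne
    · intro he; exact hu (he ▸ hv)

lemma sum_erase_classes {M : Type} [AddCommMonoid M] (c : V2 k) (g : V → M) :
    ∑ c' ∈ Finset.univ.erase c, ∑ u ∈ fiber k c', g u = ∑ u ∈ (fiber k c)ᶜ, g u := by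
  have h1 : Finset.univ.erase c = ({c} : Finset (V2 k))ᶜ := by
    ext c'; simp [eq_comm]
  rw [h1, ← sum_hatF, hatF_compl, hatF_singleton]

lemma k2_same (c : V2 k) : k2 k c c = (∑ v ∈ fiber k c, k v v) +
    (∑ u ∈ fiber k c, ∑ v ∈ (fiber k c).erase u, if IsBridge k u v then 0 else k u v) / 2 := by
  simp [k2]

lemma k2_ne {c c' : V2 k} (h : c ≠ c') :
    k2 k c c' = ∑ u ∈ fiber k c, ∑ v ∈ fiber k c', k u v := by
  simp [k2, h]

lemma nonbridge_symm (hsym : ∀ u v, k u v = k v u) (u v : V) :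
    (if IsBridge k u v then 0 else k u v) = (if IsBridge k v u then 0 else k v u) := by
  by_cases h : IsBridge k u v
  · simp [h, bridge_symm hsym h]
  · have h' : ¬ IsBridge k v u := fun hh => h (bridge_symm hsym hh)
    simp [h, h', hsym u v]

lemma k2_symm (hsym : ∀ u v, k u v = k v u) (c c' : V2 k) : k2 k c c' = k2 k c' c := by
  by_cases h : c = c'
  · rw [h]
  · rw [k2_ne h, k2_ne (Ne.symm h), Finset.sum_comm]
    exact Finset.sum_congr rfl fun u _ => Finset.sum_congr rfl fun v _ => hsym v u

lemma ite_bridge_split (u v : V) :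
    k u v = (if IsBridge k u v then 0 else k u v) + (if IsBridge k u v then k u v else 0) := by
  by_cases h : IsBridge k u v <;> simp [h]

/-- `δ` of a saturated set agrees with `δ` in the contracted graph. -/
lemma deltaA_hatF (B : Finset (V2 k)) : deltaA k (hatF k B) = deltaA (k2 k) B := by
  unfold deltaA
  rw [← hatF_compl]
  rw [sum_hatF B (fun u => ∑ v ∈ hatF k Bᶜ, (k u v : ℤ))]
  refine Finset.sum_congr rfl fun c hc => ?_
  have h1 : ∀ u, ∑ v ∈ hatF k Bᶜ, (k u v : ℤ) = ∑ c' ∈ Bᶜ, ∑ v ∈ fiber k c', (k u v : ℤ) :=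
    fun u => sum_hatF Bᶜ _
  rw [Finset.sum_congr rfl fun u _ => h1 u, Finset.sum_comm]
  refine Finset.sum_congr rfl fun c' hc' => ?_
  have hne : c ≠ c' := by
    intro h
    exact (Finset.mem_compl.1 hc') (h ▸ hc)
  rw [k2_ne hne]
  push_cast
  rfl

/-- fiber sums of multidegrees. -/
lemma degA_hatF (d : V → ℤ) (B : Finset (V2 k)) :
    degA d (hatF k B) = degA (alphaMap k d) B := by
  unfold degA alphaMap
  exact sum_hatF B d

/-- The per-class identity for the `wA`-summand, using the tree structure of bridges. -/
lemma tau_fiber (hconn : (graphOf k).Connected) (hsym : ∀ u v, k u v = k v u)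
    (w : V → ℕ) (c : V2 k) :
    2 * (w2 k w c : ℤ) - 2 + 2 * (k2 k c c : ℤ)
        + ∑ c' ∈ Finset.univ.erase c, (k2 k c' c : ℤ)
      = ∑ v ∈ fiber k c,
        (2 * (w v : ℤ) - 2 + 2 * (k v v : ℤ) + ∑ u ∈ Finset.univ.erase v, (k u v : ℤ)) := by
  classical
  set F := fiber k c with hF
  set natNB := ∑ u ∈ F, ∑ v ∈ F.erase u, (if IsBridge k u v then 0 else k u v) with hnatNB
  set natBR := ∑ u ∈ F, ∑ v ∈ F.erase u, (if IsBridge k u v then k u v else 0) with hnatBR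
  set natINS := ∑ u ∈ F, ∑ v ∈ F.erase u, k u v with hnatINS
  -- nat facts
  have hNBeven : 2 * (natNB / 2) = natNB := even_sym_sum F _ (nonbridge_symm hsym)
  have hBR : natBR + 2 = 2 * F.card := fiber_edge_count hconn hsym c
  have hINSsplit : natINS = natNB + natBR := by
    rw [hnatINS, hnatNB, hnatBR, ← Finset.sum_add_distrib]
    refine Finset.sum_congr rfl fun u _ => ?_
    rw [← Finset.sum_add_distrib]
    exact Finset.sum_congr rfl fun v _ => ite_bridge_split u v
  have keyNat : 2 * (natNB / 2) + 2 * F.card = natINS + 2 := by omega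
  have key : 2 * ((natNB / 2 : ℕ) : ℤ) + 2 * (F.card : ℤ) = (natINS : ℤ) + 2 := by
    exact_mod_cast keyNat
  -- ℤ versions of the pieces
  have hw2 : (w2 k w c : ℤ) = ∑ v ∈ F, (w v : ℤ) := by
    unfold w2; push_cast; rfl
  have hk2 : (k2 k c c : ℤ) = (∑ v ∈ F, (k v v : ℤ)) + ((natNB / 2 : ℕ) : ℤ) := by
    rw [k2_same, Nat.cast_add]
    congr 1
    · push_cast; rfl
  have hout : ∑ c' ∈ Finset.univ.erase c, (k2 k c' c : ℤ)
      = ∑ v ∈ F, ∑ u ∈ Fᶜ, (k u v : ℤ) := by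
    have h2 : ∀ c' ∈ Finset.univ.erase c, (k2 k c' c : ℤ)
        = ∑ u ∈ fiber k c', ∑ v ∈ F, (k u v : ℤ) := by
      intro c' hc'
      have hne : c' ≠ c := (Finset.mem_erase.1 hc').1
      rw [k2_ne hne]; push_cast; rfl
    rw [Finset.sum_congr rfl h2, sum_erase_classes c (fun u => ∑ v ∈ F, (k u v : ℤ)),
      Finset.sum_comm]
  have hINSZ : (natINS : ℤ) = ∑ v ∈ F, ∑ u ∈ F.erase v, (k u v : ℤ) := by
    rw [hnatINS]
    push_cast
    refine Finset.sum_congr rfl fun a _ => Finset.sum_congr rfl fun b _ => ?_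
    rw [hsym a b]
  -- split the RHS
  have hsplit : ∀ v ∈ F, (2 * (w v : ℤ) - 2 + 2 * (k v v : ℤ)
        + ∑ u ∈ Finset.univ.erase v, (k u v : ℤ))
      = (2 * (w v : ℤ) - 2 + 2 * (k v v : ℤ))
        + ((∑ u ∈ F.erase v, (k u v : ℤ)) + ∑ u ∈ Fᶜ, (k u v : ℤ)) := by
    intro v hv
    rw [sum_erase_split F hv (fun u => (k u v : ℤ))]
  rw [Finset.sum_congr rfl hsplit]
  rw [Finset.sum_add_distrib, Finset.sum_add_distrib, Finset.sum_add_distrib,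
    Finset.sum_sub_distrib, Finset.sum_const, ← Finset.mul_sum, ← Finset.mul_sum]
  rw [hw2, hk2, hout, nsmul_eq_mul]
  rw [← hINSZ] at *
  linarith [key]

/-- `wA` of a saturated set agrees with `wA` in the contracted graph. -/
lemma wA_hatF (hconn : (graphOf k).Connected) (hsym : ∀ u v, k u v = k v u)
    (w : V → ℕ) (B : Finset (V2 k)) :
    wA (k2 k) (w2 k w) B = wA k w (hatF k B) := by
  unfold wA
  rw [sum_hatF B]
  exact Finset.sum_congr rfl fun c _ => tau_fiber hconn hsym w c

end Sat

end Stmt9Aux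

namespace Stmt9Aux

variable {V : Type} [Fintype V] [DecidableEq V]

section Genus

variable {k : V → V → ℕ}

lemma numEdges_shift (hconn : (graphOf k).Connected) (hsym : ∀ u v, k u v = k v u) :
    2 * numEdges (k2 k) + 2 * Fintype.card V = 2 * numEdges k + 2 * Fintype.card (V2 k) := by
  classical
  have hOFFeven : 2 * ((∑ u, ∑ v ∈ Finset.univ.erase u, k u v) / 2)
      = ∑ u, ∑ v ∈ Finset.univ.erase u, k u v :=
    even_sym_sum Finset.univ k hsym
  have hOFF2even : 2 * ((∑ c, ∑ c' ∈ Finset.univ.erase c, k2 k c c') / 2)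
      = ∑ c, ∑ c' ∈ Finset.univ.erase c, k2 k c c' :=
    even_sym_sum Finset.univ (k2 k) (k2_symm hsym)
  have h2E : 2 * numEdges k = 2 * (∑ v, k v v) + ∑ u, ∑ v ∈ Finset.univ.erase u, k u v := by
    unfold numEdges; rw [Nat.mul_add, hOFFeven]
  have h2E2 : 2 * numEdges (k2 k) = 2 * (∑ c, k2 k c c)
      + ∑ c, ∑ c' ∈ Finset.univ.erase c, k2 k c c' := by
    unfold numEdges; rw [Nat.mul_add, hOFF2even]
  have hdiag : ∀ c : V2 k, 2 * k2 k c c = 2 * (∑ v ∈ fiber k c, k v v)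
      + ∑ u ∈ fiber k c, ∑ v ∈ (fiber k c).erase u, (if IsBridge k u v then 0 else k u v) := by
    intro c
    rw [k2_same, Nat.mul_add, even_sym_sum _ _ (nonbridge_symm hsym)]
  have hdiagsum : 2 * (∑ c, k2 k c c) = 2 * (∑ v, k v v)
      + ∑ c, ∑ u ∈ fiber k c, ∑ v ∈ (fiber k c).erase u,
        (if IsBridge k u v then 0 else k u v) := by
    rw [Finset.mul_sum, Finset.sum_congr rfl (fun c _ => hdiag c), Finset.sum_add_distrib,
      ← Finset.mul_sum, sum_fiber (fun v => k v v)]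
  have hoff2 : ∀ c : V2 k, ∑ c' ∈ Finset.univ.erase c, k2 k c c'
      = ∑ u ∈ fiber k c, ∑ v ∈ (fiber k c)ᶜ, k u v := by
    intro c
    have h2 : ∀ c' ∈ Finset.univ.erase c, k2 k c c'
        = ∑ v ∈ fiber k c', ∑ u ∈ fiber k c, k u v := by
      intro c' hc'
      rw [k2_ne (Ne.symm (Finset.mem_erase.1 hc').1)]
      exact Finset.sum_comm
    rw [Finset.sum_congr rfl h2, sum_erase_classes c (fun v => ∑ u ∈ fiber k c, k u v)]
    exact Finset.sum_comm
  have hA : (∑ u, ∑ v ∈ (fiber k (phi k u)).erase u, k u v)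
      = ∑ c, ∑ u ∈ fiber k c, ∑ v ∈ (fiber k c).erase u, k u v := by
    rw [← sum_fiber (fun u => ∑ v ∈ (fiber k (phi k u)).erase u, k u v)]
    refine Finset.sum_congr rfl fun c _ => Finset.sum_congr rfl fun u hu => ?_
    rw [mem_fiber.1 hu]
  have hB : (∑ u, ∑ v ∈ (fiber k (phi k u))ᶜ, k u v)
      = ∑ c, ∑ u ∈ fiber k c, ∑ v ∈ (fiber k c)ᶜ, k u v := by
    rw [← sum_fiber (fun u => ∑ v ∈ (fiber k (phi k u))ᶜ, k u v)]
    refine Finset.sum_congr rfl fun c _ => Finset.sum_congr rfl fun u hu => ?_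
    rw [mem_fiber.1 hu]
  have hsplitOFF : (∑ u, ∑ v ∈ Finset.univ.erase u, k u v)
      = (∑ c, ∑ u ∈ fiber k c, ∑ v ∈ (fiber k c).erase u, k u v)
        + ∑ c, ∑ u ∈ fiber k c, ∑ v ∈ (fiber k c)ᶜ, k u v := by
    rw [← hA, ← hB, ← Finset.sum_add_distrib]
    refine Finset.sum_congr rfl fun u _ => ?_
    exact sum_erase_split (fiber k (phi k u)) (phi_mem_fiber u) (fun v => k u v)
  have hINSc : ∀ c : V2 k, (∑ u ∈ fiber k c, ∑ v ∈ (fiber k c).erase u, k u v)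
      = (∑ u ∈ fiber k c, ∑ v ∈ (fiber k c).erase u, if IsBridge k u v then 0 else k u v)
        + ∑ u ∈ fiber k c, ∑ v ∈ (fiber k c).erase u, if IsBridge k u v then k u v else 0 := by
    intro c
    rw [← Finset.sum_add_distrib]
    refine Finset.sum_congr rfl fun u _ => ?_
    rw [← Finset.sum_add_distrib]
    exact Finset.sum_congr rfl fun v _ => ite_bridge_split u v
  have hINSsum : (∑ c, ∑ u ∈ fiber k c, ∑ v ∈ (fiber k c).erase u, k u v)
      = (∑ c, ∑ u ∈ fiber k c, ∑ v ∈ (fiber k c).erase u,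
          if IsBridge k u v then 0 else k u v)
        + ∑ c, ∑ u ∈ fiber k c, ∑ v ∈ (fiber k c).erase u,
          if IsBridge k u v then k u v else 0 := by
    rw [Finset.sum_congr rfl fun c _ => hINSc c, Finset.sum_add_distrib]
  have hBRsum : (∑ c, ∑ u ∈ fiber k c, ∑ v ∈ (fiber k c).erase u,
        if IsBridge k u v then k u v else 0) + 2 * Fintype.card (V2 k)
      = 2 * Fintype.card V := by
    have h1 : ∀ c : V2 k, (∑ u ∈ fiber k c, ∑ v ∈ (fiber k c).erase u,
        if IsBridge k u v then k u v else 0) + 2 = 2 * (fiber k c).card :=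
      fun c => fiber_edge_count hconn hsym c
    have h2 : (∑ c : V2 k, ((∑ u ∈ fiber k c, ∑ v ∈ (fiber k c).erase u,
        if IsBridge k u v then k u v else 0) + 2)) = ∑ c : V2 k, 2 * (fiber k c).card :=
      Finset.sum_congr rfl fun c _ => h1 c
    rw [Finset.sum_add_distrib, Finset.sum_const, ← Finset.mul_sum] at h2
    have h3 : ∑ c : V2 k, (fiber k c).card = Fintype.card V := by
      rw [← Finset.card_univ, Finset.card_eq_sum_ones]
      rw [← sum_fiber (fun _ => 1)]
      exact Finset.sum_congr rfl fun c _ => (Finset.card_eq_sum_ones _)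
    rw [h3, smul_eq_mul] at h2
    rw [← Finset.card_univ]
    omega
  have hoff2sum : (∑ c, ∑ c' ∈ Finset.univ.erase c, k2 k c c')
      = ∑ c, ∑ u ∈ fiber k c, ∑ v ∈ (fiber k c)ᶜ, k u v :=
    Finset.sum_congr rfl fun c _ => hoff2 c
  -- assemble
  have hfin := h2E
  rw [hsplitOFF, hINSsum] at hfin
  rw [h2E2, hdiagsum, hoff2sum, hfin]
  have h4 : (Finset.univ : Finset (V2 k)).card • 2 = 2 * Fintype.card (V2 k) := by
    rw [Finset.card_univ, smul_eq_mul, Nat.mul_comm]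
  omega

lemma genus_eq (hconn : (graphOf k).Connected) (hsym : ∀ u v, k u v = k v u) (w : V → ℕ) :
    genus (k2 k) (w2 k w) = genus k w := by
  unfold genus
  have h1 : ∑ c, (w2 k w c : ℤ) = ∑ v, (w v : ℤ) := by
    rw [← sum_fiber (fun v => (w v : ℤ))]
    refine Finset.sum_congr rfl fun c _ => ?_
    unfold w2; push_cast; rfl
  have h2 := numEdges_shift hconn hsym
  have h2' : (numEdges (k2 k) : ℤ) + (Fintype.card V : ℤ)
      = (numEdges k : ℤ) + (Fintype.card (V2 k) : ℤ) := by
    exact_mod_cast (by omega : numEdges (k2 k) + Fintype.card V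
      = numEdges k + Fintype.card (V2 k))
  rw [h1]
  linarith [h2']

end Genus

section Balanced

variable {k : V → V → ℕ} {w : V → ℕ}

/-- The `v`-th coordinate of the canonical fractional multidegree. -/
def qv (k : V → V → ℕ) (w : V → ℕ) (D : ℤ) : V → ℚ := fun v =>
  (D : ℚ) * ((2 * (w v : ℤ) - 2 + 2 * (k v v : ℤ)
      + ∑ u ∈ Finset.univ.erase v, (k u v : ℤ) : ℤ) : ℚ)
    / ((2 * genus k w - 2 : ℤ) : ℚ)

lemma qv_sum (D : ℤ) (A : Finset V) :
    ∑ v ∈ A, qv k w D v = (D : ℚ) * ((wA k w A : ℤ) : ℚ) / ((2 * genus k w - 2 : ℤ) : ℚ) := by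
  unfold qv wA
  rw [← Finset.sum_div, ← Finset.mul_sum]
  congr 2
  push_cast
  rfl

lemma deltaA_compl (hsym : ∀ u v, k u v = k v u) (A : Finset V) :
    deltaA k Aᶜ = deltaA k A := by
  unfold deltaA
  rw [compl_compl, Finset.sum_comm]
  exact Finset.sum_congr rfl fun u _ => Finset.sum_congr rfl fun v _ => by rw [hsym]

lemma wA_univ (hsym : ∀ u v, k u v = k v u) (w : V → ℕ) :
    wA k w Finset.univ = 2 * genus k w - 2 := by
  unfold wA genus numEdges
  have he := even_sym_sum (Finset.univ : Finset V) k hsym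
  have he' : 2 * ((((∑ u, ∑ v ∈ Finset.univ.erase u, k u v) / 2 : ℕ)) : ℤ)
      = ((∑ u, ∑ v ∈ Finset.univ.erase u, k u v : ℕ) : ℤ) := by exact_mod_cast he
  have hOFFZ : (∑ v : V, ∑ u ∈ Finset.univ.erase v, (k u v : ℤ))
      = ((∑ u : V, ∑ v ∈ Finset.univ.erase u, k u v : ℕ) : ℤ) := by
    push_cast
    refine Finset.sum_congr rfl fun a _ => Finset.sum_congr rfl fun b _ => ?_
    rw [hsym a b]
  have hBZ : ((∑ v, k v v : ℕ) : ℤ) = ∑ v, (k v v : ℤ) := by push_cast; rfl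
  rw [Finset.sum_add_distrib, Finset.sum_add_distrib, Finset.sum_sub_distrib,
    Finset.sum_const, ← Finset.mul_sum, ← Finset.mul_sum, hOFFZ, Nat.cast_add, hBZ,
    Finset.card_univ, nsmul_eq_mul]
  push_cast
  linarith [he']

lemma sum_qv_univ (hsym : ∀ u v, k u v = k v u)
    (hgne : ((2 * genus k w - 2 : ℤ) : ℚ) ≠ 0) (D : ℤ) :
    ∑ v, qv k w D v = (D : ℚ) := by
  rw [qv_sum D Finset.univ, wA_univ hsym w, mul_div_assoc, div_self hgne, mul_one]

lemma degA_compl (d : V → ℤ) (A : Finset V) :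
    degA d Aᶜ = degA d Finset.univ - degA d A := by
  unfold degA
  have := Finset.sum_add_sum_compl A d
  linarith

lemma sum_qv_compl (hsym : ∀ u v, k u v = k v u)
    (hgne : ((2 * genus k w - 2 : ℤ) : ℚ) ≠ 0) (D : ℤ) (A : Finset V) :
    ∑ v ∈ Aᶜ, qv k w D v = (D : ℚ) - ∑ v ∈ A, qv k w D v := by
  have := Finset.sum_add_sum_compl A (qv k w D)
  rw [sum_qv_univ hsym hgne D] at this
  linarith

lemma mA_eq (D : ℤ) (A : Finset V) :
    mA k w D A = (∑ v ∈ A, qv k w D v) - (deltaA k A : ℚ) / 2 := by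
  unfold mA
  rw [qv_sum]

lemma isBalanced_iff (hsym : ∀ u v, k u v = k v u)
    (hgne : ((2 * genus k w - 2 : ℤ) : ℚ) ≠ 0) (D : ℤ) (d : V → ℤ) :
    IsBalanced k w D d ↔ (degA d Finset.univ = D ∧
      ∀ A : Finset V, |(degA d A : ℚ) - ∑ v ∈ A, qv k w D v| ≤ (deltaA k A : ℚ) / 2) := by
  constructor
  · rintro ⟨ht, hA⟩
    refine ⟨ht, fun A => abs_le.2 ⟨?_, ?_⟩⟩
    · have h1 := hA A
      rw [mA_eq] at h1
      linarith
    · have h1 := hA Aᶜ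
      rw [mA_eq, sum_qv_compl hsym hgne D A, deltaA_compl hsym, degA_compl, ht] at h1
      push_cast at h1 ⊢
      linarith
  · rintro ⟨ht, hA⟩
    refine ⟨ht, fun A => ?_⟩
    have h1 := (abs_le.1 (hA A)).1
    rw [mA_eq]
    linarith

end Balanced

end Stmt9Aux

namespace Stmt9Aux

variable {V : Type} [Fintype V] [DecidableEq V]

lemma floor_half_bound (a : ℚ) : |((⌊a + 1/2⌋ : ℤ) : ℚ) - a| ≤ 1/2 := by
  have h1 := Int.floor_le (a + 1/2)
  have h2 := Int.lt_floor_add_one (a + 1/2)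
  rw [abs_le]
  constructor <;> linarith

section Main

variable {k : V → V → ℕ}

lemma eSum_zero {P Q : Finset V} (h : ∀ u ∈ P, ∀ v ∈ Q, k u v = 0) :
    (∑ u ∈ P, ∑ v ∈ Q, (k u v : ℤ)) = 0 :=
  Finset.sum_eq_zero fun u hu => Finset.sum_eq_zero fun v hv => by rw [h u hu v hv]; rfl

lemma deltaA_decomp {A1 A2 : Finset V} (hdisj : Disjoint A1 A2) :
    deltaA k A1 + deltaA k A2
      = deltaA k (A1 ∪ A2) + (∑ u ∈ A1, ∑ v ∈ A2, (k u v : ℤ))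
        + ∑ u ∈ A2, ∑ v ∈ A1, (k u v : ℤ) := by
  unfold deltaA
  have h1 : A1ᶜ = A2 ∪ (A1 ∪ A2)ᶜ := by
    ext u
    simp only [Finset.mem_compl, Finset.mem_union]
    constructor
    · intro hu
      by_cases h2 : u ∈ A2
      · exact Or.inl h2
      · exact Or.inr (by tauto)
    · rintro (h2 | h2)
      · exact fun hu => Finset.disjoint_left.1 hdisj hu h2
      · tauto
  have h2 : A2ᶜ = A1 ∪ (A1 ∪ A2)ᶜ := by
    ext u
    simp only [Finset.mem_compl, Finset.mem_union]
    constructor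
    · intro hu
      by_cases h3 : u ∈ A1
      · exact Or.inl h3
      · exact Or.inr (by tauto)
    · rintro (h3 | h3)
      · exact fun hu => Finset.disjoint_right.1 hdisj hu h3
      · tauto
  have hsub2 : Disjoint A2 ((A1 ∪ A2)ᶜ) :=
    disjoint_compl_right.mono_left Finset.subset_union_right
  have hsub1 : Disjoint A1 ((A1 ∪ A2)ᶜ) :=
    disjoint_compl_right.mono_left Finset.subset_union_left
  have e1 : ∀ u : V, ∑ v ∈ A1ᶜ, (k u v : ℤ)
      = (∑ v ∈ A2, (k u v : ℤ)) + ∑ v ∈ (A1 ∪ A2)ᶜ, (k u v : ℤ) := by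
    intro u; rw [h1, Finset.sum_union hsub2]
  have e2 : ∀ u : V, ∑ v ∈ A2ᶜ, (k u v : ℤ)
      = (∑ v ∈ A1, (k u v : ℤ)) + ∑ v ∈ (A1 ∪ A2)ᶜ, (k u v : ℤ) := by
    intro u; rw [h2, Finset.sum_union hsub1]
  rw [Finset.sum_congr rfl (fun u _ => e1 u), Finset.sum_congr rfl (fun u _ => e2 u),
    Finset.sum_union hdisj, Finset.sum_add_distrib, Finset.sum_add_distrib]
  ring

variable (hconn : (graphOf k).Connected) (hsym : ∀ u v, k u v = k v u)

include hconn hsym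

lemma eSum_into_side {x y : V} (hb : IsBridge k x y) {A : Finset V}
    (hAS : ∀ a ∈ A, a ∉ Sside k x y) (hx : x ∈ A) :
    (∑ u ∈ A, ∑ v ∈ Sside k x y, (k u v : ℤ)) = 1 := by
  rw [Finset.sum_eq_single x]
  · rw [Finset.sum_eq_single y]
    · rw [hb.2.1]; rfl
    · intro v hv hvy
      have h0 : k x v = 0 := by
        by_contra h
        exact hvy (Sside_crossing' hconn hb hsym (hAS x hx) hv (Nat.pos_of_ne_zero h)).2
      rw [h0]; rfl
    · intro hy
      exact absurd (y_mem_Sside hconn hb) hy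
  · intro u hu hux
    refine Finset.sum_eq_zero fun v hv => ?_
    have h0 : k u v = 0 := by
      by_contra h
      exact hux (Sside_crossing' hconn hb hsym (hAS u hu) hv (Nat.pos_of_ne_zero h)).1
    rw [h0]; rfl
  · intro hx'
    exact absurd hx hx'

lemma eSum_side_out {x y : V} (hb : IsBridge k x y) {Q : Finset V}
    (hQS : ∀ v ∈ Q, v ∉ Sside k x y) (hxQ : x ∉ Q) :
    (∑ u ∈ Sside k x y, ∑ v ∈ Q, (k u v : ℤ)) = 0 := by
  refine eSum_zero fun u hu v hv => ?_
  by_contra h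
  have := Sside_crossing hconn hb hu (hQS v hv) (Nat.pos_of_ne_zero h)
  exact hxQ (this.2 ▸ hv)

/-- Disjointness of the far sides of distinct crossing bridges, when `A` misses both sides. -/
lemma Ssides_disjoint {A : Finset V} {p p' : V × V}
    (hbp : IsBridge k p.1 p.2) (hbp' : IsBridge k p'.1 p'.2)
    (h1 : p.1 ∈ A) (h1' : p'.1 ∈ A)
    (hAp : ∀ a ∈ A, a ∉ Sside k p.1 p.2) (hAp' : ∀ a ∈ A, a ∉ Sside k p'.1 p'.2)
    (hne : p ≠ p') :
    Disjoint (Sside k p.1 p.2) (Sside k p'.1 p'.2) := by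
  have hy' : p'.2 ∉ Sside k p.1 p.2 := by
    intro hmem
    have := Sside_crossing' hconn hbp hsym (hAp p'.1 h1') hmem
      (by rw [hbp'.2.1]; norm_num)
    exact hne (Prod.ext this.1 this.2).symm
  rw [Finset.disjoint_right]
  intro z hz hzmem
  rw [mem_Sside] at hz
  rw [SimpleGraph.reachable_iff_reflTransGen] at hz
  induction hz with
  | refl => exact hy' hzmem
  | @tail b c' hpref hadj ih =>
    by_cases hbmem : b ∈ Sside k p.1 p.2
    · exact ih hbmem
    · have hpos : 0 < k b c' := by
        rcases hadj.2 with h | h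
        · exact removeEdge_pos _ h
        · rw [hsym]; exact removeEdge_pos _ h
      have hcross := Sside_crossing' hconn hbp hsym hbmem hzmem hpos
      -- b = p.1 ∈ A, but b is reachable from p'.2, so b ∈ Sside p'
      have hbS' : b ∈ Sside k p'.1 p'.2 := by
        rw [mem_Sside, SimpleGraph.reachable_iff_reflTransGen]
        exact hpref
      exact hAp' b (hcross.1 ▸ h1) hbS'

omit hconn hsym

lemma saturated_eq_hatF {A : Finset V}
    (hsat : ∀ v ∈ A, ∀ u, phi k u = phi k v → u ∈ A) :
    A = hatF k (A.image (phi k)) := by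
  ext u
  simp only [mem_hatF, Finset.mem_image]
  constructor
  · intro hu; exact ⟨u, hu, rfl⟩
  · rintro ⟨v, hv, heq⟩
    exact hsat v hv u heq.symm

lemma qv_hatF {w : V → ℕ} (hconn : (graphOf k).Connected) (hsym : ∀ u v, k u v = k v u)
    (D : ℤ) (B : Finset (V2 k)) :
    ∑ v ∈ hatF k B, qv k w D v = ∑ c ∈ B, qv (k2 k) (w2 k w) D c := by
  rw [qv_sum D (hatF k B), qv_sum D B, genus_eq hconn hsym w, wA_hatF hconn hsym w B]

lemma degA_comb (d0 : V → ℤ) (OB : Finset (V × V)) (coef : V × V → ℤ) (A : Finset V) :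
    degA (fun v => d0 v + ∑ p ∈ OB, coef p
        * ((if v = p.2 then (1 : ℤ) else 0) - (if v = p.1 then 1 else 0))) A
      = degA d0 A + ∑ p ∈ OB, coef p
        * ((if p.2 ∈ A then (1 : ℤ) else 0) - (if p.1 ∈ A then 1 else 0)) := by
  unfold degA
  rw [Finset.sum_add_distrib]
  congr 1
  rw [Finset.sum_comm]
  refine Finset.sum_congr rfl fun p _ => ?_
  rw [← Finset.mul_sum]
  congr 1
  rw [Finset.sum_sub_distrib]
  congr 1
  · rw [Finset.sum_ite_eq' A p.2 (fun _ => (1 : ℤ))]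
  · rw [Finset.sum_ite_eq' A p.1 (fun _ => (1 : ℤ))]

end Main

end Stmt9Aux

namespace Stmt9Aux

variable {V : Type} [Fintype V] [DecidableEq V]

section CaseC

variable {k : V → V → ℕ} (hconn : (graphOf k).Connected) (hsym : ∀ u v, k u v = k v u)

include hconn hsym

lemma case_c {w : V → ℕ} {D : ℤ} (d : V → ℤ) (A : Finset V) (CB : Finset (V × V))
    (hCBmem : ∀ p ∈ CB, IsBridge k p.1 p.2 ∧ p.1 ∈ A ∧ p.2 ∉ A)
    (hcomp : ∀ a b, IsBridge k a b → a ∈ A → b ∉ A → (a, b) ∈ CB)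
    (hAS : ∀ p ∈ CB, ∀ a ∈ A, a ∉ Sside k p.1 p.2)
    (hqb : ∀ B : Finset (V2 k), |(degA d (hatF k B) : ℚ) - ∑ v ∈ hatF k B, qv k w D v|
        ≤ (deltaA k (hatF k B) : ℚ) / 2)
    (hsb : ∀ x y : V, IsBridge k x y →
        |(degA d (Sside k x y) : ℚ) - ∑ v ∈ Sside k x y, qv k w D v| ≤ 1/2) :
    |(degA d A : ℚ) - ∑ v ∈ A, qv k w D v| ≤ (deltaA k A : ℚ) / 2 := by
  classical
  have hdisjSides : (↑CB : Set (V × V)).PairwiseDisjoint (fun p => Sside k p.1 p.2) := by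
    intro p hp p' hp' hne
    rw [Finset.mem_coe] at hp hp'
    obtain ⟨hbp, hp1, _⟩ := hCBmem p hp
    obtain ⟨hbp', hp1', _⟩ := hCBmem p' hp'
    exact Ssides_disjoint hconn hsym hbp hbp' hp1 hp1' (hAS p hp) (hAS p' hp') hne
  have hdisjAT : Disjoint A (CB.biUnion fun p => Sside k p.1 p.2) := by
    rw [Finset.disjoint_left]
    intro a ha hmem
    obtain ⟨p, hp, hm⟩ := Finset.mem_biUnion.1 hmem
    exact hAS p hp a ha hm
  -- saturation of the enlarged set
  have hsatB : ∀ v ∈ A ∪ (CB.biUnion fun p => Sside k p.1 p.2), ∀ u,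
      phi k u = phi k v → u ∈ A ∪ (CB.biUnion fun p => Sside k p.1 p.2) := by
    intro v hv u hphi
    by_contra hu
    rcases crossing_bridge_of (A := A ∪ (CB.biUnion fun p => Sside k p.1 p.2)) hsym
        (eqvGen_of_phi_eq hphi) with hiff | ⟨a, b, hab, haB, hbB⟩
    · exact hu (hiff.2 hv)
    · rcases Finset.mem_union.1 haB with haA | haT
      · have hbA : b ∉ A := fun hbA => hbB (Finset.mem_union_left _ hbA)
        have hpab : (a, b) ∈ CB := hcomp a b hab haA hbA
        exact hbB (Finset.mem_union_right _
          (Finset.mem_biUnion.2 ⟨(a, b), hpab, y_mem_Sside hconn hab⟩))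
      · obtain ⟨p, hp, hmem⟩ := Finset.mem_biUnion.1 haT
        obtain ⟨hbp, hp1, _⟩ := hCBmem p hp
        have hbS : b ∉ Sside k p.1 p.2 := fun hb' =>
          hbB (Finset.mem_union_right _ (Finset.mem_biUnion.2 ⟨p, hp, hb'⟩))
        have hcross := Sside_crossing hconn hbp hmem hbS (by rw [hab.2.1]; norm_num)
        exact hbB (Finset.mem_union_left _ (hcross.2 ▸ hp1))
  have hsatbound : |(degA d (A ∪ (CB.biUnion fun p => Sside k p.1 p.2)) : ℚ)
      - ∑ v ∈ A ∪ (CB.biUnion fun p => Sside k p.1 p.2), qv k w D v|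
      ≤ (deltaA k (A ∪ (CB.biUnion fun p => Sside k p.1 p.2)) : ℚ) / 2 := by
    rw [saturated_eq_hatF hsatB]
    exact hqb _
  -- additivity of degree and q over the enlarged set
  have hdadd : degA d (A ∪ (CB.biUnion fun p => Sside k p.1 p.2))
      = degA d A + ∑ p ∈ CB, degA d (Sside k p.1 p.2) := by
    unfold degA
    rw [Finset.sum_union hdisjAT, Finset.sum_biUnion hdisjSides]
  have hqadd : (∑ v ∈ A ∪ (CB.biUnion fun p => Sside k p.1 p.2), qv k w D v)
      = (∑ v ∈ A, qv k w D v) + ∑ p ∈ CB, ∑ v ∈ Sside k p.1 p.2, qv k w D v := by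
    rw [Finset.sum_union hdisjAT, Finset.sum_biUnion hdisjSides]
  -- the complement of A decomposes
  have hAc : Aᶜ = (A ∪ (CB.biUnion fun p => Sside k p.1 p.2))ᶜ
      ∪ (CB.biUnion fun p => Sside k p.1 p.2) := by
    ext u
    simp only [Finset.mem_compl, Finset.mem_union]
    constructor
    · intro hu
      by_cases ht' : u ∈ CB.biUnion fun p => Sside k p.1 p.2
      · exact Or.inr ht'
      · exact Or.inl (by tauto)
    · rintro (hu | hu)
      · intro ha; exact hu (Or.inl ha)
      · intro ha; exact (Finset.disjoint_left.1 hdisjAT) ha hu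
  have hdisjBT : Disjoint ((A ∪ (CB.biUnion fun p => Sside k p.1 p.2))ᶜ)
      (CB.biUnion fun p => Sside k p.1 p.2) :=
    Finset.disjoint_left.2 fun x hx hx2 =>
      (Finset.mem_compl.1 hx) (Finset.mem_union_right _ hx2)
  -- δ_A = e(A, Bhᶜ) + #CB
  have hδA : deltaA k A
      = (∑ u ∈ A, ∑ v ∈ (A ∪ (CB.biUnion fun p => Sside k p.1 p.2))ᶜ, (k u v : ℤ))
        + (CB.card : ℤ) := by
    unfold deltaA
    have e1 : ∀ u : V, ∑ v ∈ Aᶜ, (k u v : ℤ)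
        = (∑ v ∈ (A ∪ (CB.biUnion fun p => Sside k p.1 p.2))ᶜ, (k u v : ℤ))
          + ∑ p ∈ CB, ∑ v ∈ Sside k p.1 p.2, (k u v : ℤ) := by
      intro u
      rw [hAc, Finset.sum_union hdisjBT, Finset.sum_biUnion hdisjSides]
    rw [Finset.sum_congr rfl (fun u _ => e1 u), Finset.sum_add_distrib]
    congr 1
    rw [Finset.sum_comm]
    rw [Finset.sum_congr rfl
      (fun p hp => eSum_into_side hconn hsym (hCBmem p hp).1 (hAS p hp) (hCBmem p hp).2.1)]
    rw [Finset.sum_const, nsmul_eq_mul, mul_one]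
  -- δ_Bh = e(A, Bhᶜ)
  have hδB : deltaA k (A ∪ (CB.biUnion fun p => Sside k p.1 p.2))
      = ∑ u ∈ A, ∑ v ∈ (A ∪ (CB.biUnion fun p => Sside k p.1 p.2))ᶜ, (k u v : ℤ) := by
    unfold deltaA
    rw [Finset.sum_union hdisjAT, Finset.sum_biUnion hdisjSides]
    have hzero : ∀ p ∈ CB, (∑ u ∈ Sside k p.1 p.2,
        ∑ v ∈ (A ∪ (CB.biUnion fun p => Sside k p.1 p.2))ᶜ, (k u v : ℤ)) = 0 := by
      intro p hp
      refine eSum_side_out hconn hsym (hCBmem p hp).1 ?_ ?_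
      · intro v hv hmem
        exact (Finset.mem_compl.1 hv)
          (Finset.mem_union_right _ (Finset.mem_biUnion.2 ⟨p, hp, hmem⟩))
      · intro hmem
        exact (Finset.mem_compl.1 hmem) (Finset.mem_union_left _ (hCBmem p hp).2.1)
    rw [Finset.sum_congr rfl hzero, Finset.sum_const_zero, add_zero]
  have hdelta : deltaA k A
      = deltaA k (A ∪ (CB.biUnion fun p => Sside k p.1 p.2)) + (CB.card : ℤ) := by
    rw [hδA, hδB]
  -- side bounds summed
  have hsum_sb : |∑ p ∈ CB, ((degA d (Sside k p.1 p.2) : ℚ)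
      - ∑ v ∈ Sside k p.1 p.2, qv k w D v)| ≤ (CB.card : ℚ) * (1/2) := by
    refine (Finset.abs_sum_le_sum_abs _ _).trans ?_
    have h1 : ∑ p ∈ CB, |(degA d (Sside k p.1 p.2) : ℚ)
        - ∑ v ∈ Sside k p.1 p.2, qv k w D v| ≤ ∑ _p ∈ CB, (1/2 : ℚ) :=
      Finset.sum_le_sum fun p hp => hsb p.1 p.2 (hCBmem p hp).1
    refine h1.trans ?_
    rw [Finset.sum_const, nsmul_eq_mul]
  -- combine
  have hdaddQ : (degA d (A ∪ (CB.biUnion fun p => Sside k p.1 p.2)) : ℚ)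
      = (degA d A : ℚ) + ∑ p ∈ CB, (degA d (Sside k p.1 p.2) : ℚ) := by
    exact_mod_cast congrArg (Int.cast : ℤ → ℚ) hdadd
  have hkey : (degA d A : ℚ) - ∑ v ∈ A, qv k w D v
      = ((degA d (A ∪ (CB.biUnion fun p => Sside k p.1 p.2)) : ℚ)
          - ∑ v ∈ A ∪ (CB.biUnion fun p => Sside k p.1 p.2), qv k w D v)
        - ∑ p ∈ CB, ((degA d (Sside k p.1 p.2) : ℚ)
          - ∑ v ∈ Sside k p.1 p.2, qv k w D v) := by
    rw [hdaddQ, hqadd, Finset.sum_sub_distrib]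
    ring
  rw [hkey, sub_eq_add_neg]
  refine (abs_add_le _ _).trans ?_
  rw [abs_neg]
  have hdeltaQ : (deltaA k A : ℚ)
      = (deltaA k (A ∪ (CB.biUnion fun p => Sside k p.1 p.2)) : ℚ) + (CB.card : ℚ) := by
    exact_mod_cast congrArg (Int.cast : ℤ → ℚ) hdelta
  linarith [hsatbound, hsum_sb]

end CaseC

end Stmt9Aux

open Stmt9Aux

/-- The map `α : B̄_d(Γ,w) → B̄_d(Γ²,w²)` is surjective. -/
theorem stmt9 (V : Type) [Fintype V] [DecidableEq V] (k : V → V → ℕ) (w : V → ℕ)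
    (hsym : ∀ u v, k u v = k v u) (hstab : IsStable k w) (hg : 2 ≤ genus k w)
    (D : ℤ) (d2 : V2 k → ℤ) (hd2 : IsBalanced (k2 k) (w2 k w) D d2) :
    ∃ d : V → ℤ, IsBalanced k w D d ∧ alphaMap k d = d2 := by
  classical
  obtain ⟨hconn, -⟩ := hstab
  have hgne : ((2 * genus k w - 2 : ℤ) : ℚ) ≠ 0 := by
    have h1 : (2 * genus k w - 2 : ℤ) ≠ 0 := by omega
    exact_mod_cast h1
  have hgeq := genus_eq hconn hsym w
  have hgne2 : ((2 * genus (k2 k) (w2 k w) - 2 : ℤ) : ℚ) ≠ 0 := by rw [hgeq]; exact hgne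
  obtain ⟨ht2, hb2⟩ := (isBalanced_iff (k2_symm hsym) hgne2 D d2).1 hd2
  -- the construction
  set ι := Fintype.equivFin V with hι
  set OB : Finset (V × V) :=
    Finset.univ.filter (fun p : V × V => IsBridge k p.1 p.2 ∧ ι p.1 < ι p.2) with hOB
  set d0 : V → ℤ := fun v => if Quotient.out (phi k v) = v then d2 (phi k v) else 0 with hd0
  set tval : V × V → ℤ :=
    fun p => ⌊(∑ v ∈ Sside k p.1 p.2, qv k w D v) + 1/2⌋ with htval
  set coef : V × V → ℤ := fun p => tval p - degA d0 (Sside k p.1 p.2) with hcoef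
  set d : V → ℤ := fun v => d0 v + ∑ p ∈ OB, coef p
      * ((if v = p.2 then (1 : ℤ) else 0) - (if v = p.1 then 1 else 0)) with hd
  have hOBmem : ∀ p ∈ OB, IsBridge k p.1 p.2 ∧ ι p.1 < ι p.2 :=
    fun p hp => (Finset.mem_filter.1 hp).2
  have hdeg : ∀ A : Finset V, degA d A = degA d0 A + ∑ p ∈ OB, coef p
      * ((if p.2 ∈ A then (1 : ℤ) else 0) - (if p.1 ∈ A then 1 else 0)) := by
    intro A
    rw [hd]
    exact degA_comb d0 OB coef A
  -- fiber sums of d0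
  have hd0fib : ∀ c : V2 k, degA d0 (fiber k c) = d2 c := by
    intro c
    unfold degA
    rw [Finset.sum_eq_single (Quotient.out c)]
    · simp only [hd0]
      have h1 : phi k (Quotient.out c) = c := Quotient.out_eq c
      rw [h1, if_pos rfl]
    · intro v hv hvne
      simp only [hd0]
      have h1 : phi k v = c := mem_fiber.1 hv
      rw [h1, if_neg (fun h => hvne h.symm)]
    · intro h; exact absurd (out_mem_fiber c) h
  -- indicator orthogonality
  have hind : ∀ p ∈ OB, ∀ q ∈ OB,
      ((if p.2 ∈ Sside k q.1 q.2 then (1 : ℤ) else 0)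
        - (if p.1 ∈ Sside k q.1 q.2 then 1 else 0)) = if p = q then 1 else 0 := by
    intro p hp q hq
    obtain ⟨hbp, hop⟩ := hOBmem p hp
    obtain ⟨hbq, hoq⟩ := hOBmem q hq
    by_cases hpq : p = q
    · subst hpq
      rw [if_pos (y_mem_Sside hconn hbp), if_neg (x_notmem_Sside hconn hbp), if_pos rfl]
      ring
    · rw [if_neg hpq]
      by_cases h2 : p.2 ∈ Sside k q.1 q.2 <;> by_cases h1 : p.1 ∈ Sside k q.1 q.2
      · rw [if_pos h2, if_pos h1]; ring
      · exfalso
        have hc := Sside_crossing' hconn hbq hsym h1 h2 (by rw [hbp.2.1]; norm_num)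
        exact hpq (Prod.ext hc.1 hc.2)
      · exfalso
        have hc := Sside_crossing hconn hbq h1 h2 (by rw [hbp.2.1]; norm_num)
        rw [hc.1, hc.2] at hop
        exact lt_asymm hop hoq
      · rw [if_neg h2, if_neg h1]; ring
  -- fiber sums of d
  have hdfib : ∀ c : V2 k, degA d (fiber k c) = d2 c := by
    intro c
    rw [hdeg]
    have hz : ∀ p ∈ OB, coef p * ((if p.2 ∈ fiber k c then (1 : ℤ) else 0)
        - (if p.1 ∈ fiber k c then 1 else 0)) = 0 := by
      intro p hp
      have hphi : phi k p.1 = phi k p.2 := phi_bridge (hOBmem p hp).1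
      have hiff : (p.2 ∈ fiber k c) ↔ (p.1 ∈ fiber k c) := by
        rw [mem_fiber, mem_fiber, hphi]
      by_cases h : p.2 ∈ fiber k c
      · rw [if_pos h, if_pos (hiff.1 h)]; ring
      · rw [if_neg h, if_neg (fun hh => h (hiff.2 hh))]; ring
    rw [Finset.sum_congr rfl hz, Finset.sum_const_zero, add_zero, hd0fib]
  have halpha : alphaMap k d = d2 := funext fun c => hdfib c
  -- total degree
  have htot : degA d Finset.univ = D := by
    rw [hdeg]
    have hz : ∀ p ∈ OB, coef p * ((if p.2 ∈ (Finset.univ : Finset V) then (1 : ℤ) else 0)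
        - (if p.1 ∈ (Finset.univ : Finset V) then 1 else 0)) = 0 := by
      intro p _
      rw [if_pos (Finset.mem_univ _), if_pos (Finset.mem_univ _)]; ring
    rw [Finset.sum_congr rfl hz, Finset.sum_const_zero, add_zero]
    have h1 : degA d0 Finset.univ = degA d2 Finset.univ := by
      unfold degA
      rw [← sum_fiber (fun v => d0 v)]
      exact Finset.sum_congr rfl (fun c _ => hd0fib c)
    rw [h1, ht2]
  -- values at bridge sides
  have hside : ∀ q ∈ OB, degA d (Sside k q.1 q.2) = tval q := by
    intro q hq
    rw [hdeg]
    have hz : ∀ p ∈ OB, coef p * ((if p.2 ∈ Sside k q.1 q.2 then (1 : ℤ) else 0)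
        - (if p.1 ∈ Sside k q.1 q.2 then 1 else 0)) = if p = q then coef p else 0 := by
      intro p hp
      rw [hind p hp q hq]
      by_cases h : p = q <;> simp [h]
    rw [Finset.sum_congr rfl hz, Finset.sum_ite_eq' OB q coef, if_pos hq, hcoef]
    ring
  -- bounds at bridge sides (both orientations)
  have hsidebound : ∀ x y : V, IsBridge k x y →
      |(degA d (Sside k x y) : ℚ) - ∑ v ∈ Sside k x y, qv k w D v| ≤ 1/2 := by
    intro x y hb
    have hxyne : ι x ≠ ι y := fun h => hb.1 (ι.injective h)
    rcases lt_or_gt_of_ne hxyne with hlt | hgt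
    · have hq : (x, y) ∈ OB := Finset.mem_filter.2 ⟨Finset.mem_univ _, hb, hlt⟩
      have h1 := hside (x, y) hq
      rw [h1, htval]
      exact floor_half_bound _
    · have hb' := bridge_symm hsym hb
      have hq : (y, x) ∈ OB := Finset.mem_filter.2 ⟨Finset.mem_univ _, hb', hgt⟩
      have hcompl : Sside k x y = (Sside k y x)ᶜ := Sside_swap hconn hb'
      rw [hcompl, degA_compl, htot, sum_qv_compl hsym hgne D]
      have h1 := hside (y, x) hq
      rw [h1]
      have h2 : ((D - tval (y, x) : ℤ) : ℚ) - ((D : ℚ) - ∑ v ∈ Sside k y x, qv k w D v)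
          = -(((tval (y, x) : ℤ) : ℚ) - ∑ v ∈ Sside k y x, qv k w D v) := by
        push_cast; ring
      rw [h2, abs_neg, htval]
      exact floor_half_bound _
  -- saturated bound
  have hsat_bound : ∀ B : Finset (V2 k),
      |(degA d (hatF k B) : ℚ) - ∑ v ∈ hatF k B, qv k w D v|
        ≤ (deltaA k (hatF k B) : ℚ) / 2 := by
    intro B
    have h1 : degA d (hatF k B) = degA d2 B := by
      rw [degA_hatF, halpha]
    rw [h1, qv_hatF hconn hsym D B, deltaA_hatF B]
    exact hb2 B
  -- main induction on the cardinality of A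
  have main : ∀ n : ℕ, ∀ A : Finset V, A.card ≤ n →
      |(degA d A : ℚ) - ∑ v ∈ A, qv k w D v| ≤ (deltaA k A : ℚ) / 2 := by
    intro n
    induction n with
    | zero =>
      intro A hA
      have hAe : A = ∅ := Finset.card_eq_zero.1 (Nat.le_zero.1 hA)
      subst hAe
      simp [degA, deltaA]
    | succ n ih =>
      intro A hA
      set CB : Finset (V × V) := Finset.univ.filter
        (fun p : V × V => IsBridge k p.1 p.2 ∧ p.1 ∈ A ∧ p.2 ∉ A) with hCB
      have hCBmem : ∀ p ∈ CB, IsBridge k p.1 p.2 ∧ p.1 ∈ A ∧ p.2 ∉ A :=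
        fun p hp => (Finset.mem_filter.1 hp).2
      by_cases hbad : ∃ p ∈ CB, (A ∩ Sside k p.1 p.2).Nonempty
      · -- split along the bridge p
        obtain ⟨p, hp, hne⟩ := hbad
        obtain ⟨hbp, hp1, hp2⟩ := hCBmem p hp
        have hx_nS : p.1 ∉ Sside k p.1 p.2 := x_notmem_Sside hconn hbp
        have hsplit_un : (A \ Sside k p.1 p.2) ∪ (A ∩ Sside k p.1 p.2) = A :=
          Finset.sdiff_union_inter A _
        have hsplit_disj : Disjoint (A \ Sside k p.1 p.2) (A ∩ Sside k p.1 p.2) :=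
          Finset.sdiff_disjoint.mono_right Finset.inter_subset_right
        have hv1 : (∑ u ∈ A \ Sside k p.1 p.2, ∑ v ∈ A ∩ Sside k p.1 p.2, (k u v : ℤ)) = 0 := by
          refine eSum_zero fun u hu v hv => ?_
          by_contra h
          have hcross := Sside_crossing' hconn hbp hsym (Finset.mem_sdiff.1 hu).2
            (Finset.mem_inter.1 hv).2 (Nat.pos_of_ne_zero h)
          exact hp2 (hcross.2 ▸ (Finset.mem_inter.1 hv).1)
        have hv2 : (∑ u ∈ A ∩ Sside k p.1 p.2, ∑ v ∈ A \ Sside k p.1 p.2, (k u v : ℤ)) = 0 := by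
          refine eSum_zero fun u hu v hv => ?_
          by_contra h
          have hcross := Sside_crossing hconn hbp (Finset.mem_inter.1 hu).2
            (Finset.mem_sdiff.1 hv).2 (Nat.pos_of_ne_zero h)
          exact hp2 (hcross.1 ▸ (Finset.mem_inter.1 hu).1)
        have hdelta : deltaA k (A \ Sside k p.1 p.2) + deltaA k (A ∩ Sside k p.1 p.2)
            = deltaA k A := by
          have hdec := deltaA_decomp (k := k) hsplit_disj
          rw [hsplit_un, hv1, hv2] at hdec
          linarith
        have hcard1 : (A \ Sside k p.1 p.2).card ≤ n := by
          have hss : A \ Sside k p.1 p.2 ⊂ A := by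
            obtain ⟨a, ha⟩ := hne
            refine (Finset.ssubset_iff_of_subset Finset.sdiff_subset).2
              ⟨a, (Finset.mem_inter.1 ha).1, fun hmem =>
                (Finset.mem_sdiff.1 hmem).2 (Finset.mem_inter.1 ha).2⟩
          have := Finset.card_lt_card hss
          omega
        have hcard2 : (A ∩ Sside k p.1 p.2).card ≤ n := by
          have hss : A ∩ Sside k p.1 p.2 ⊂ A := by
            refine (Finset.ssubset_iff_of_subset Finset.inter_subset_left).2
              ⟨p.1, hp1, fun hmem => hx_nS (Finset.mem_inter.1 hmem).2⟩
          have := Finset.card_lt_card hss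
          omega
        have h1 := ih (A \ Sside k p.1 p.2) hcard1
        have h2 := ih (A ∩ Sside k p.1 p.2) hcard2
        have hdadd : degA d A = degA d (A \ Sside k p.1 p.2) + degA d (A ∩ Sside k p.1 p.2) := by
          unfold degA
          rw [← Finset.sum_union hsplit_disj, hsplit_un]
        have hqadd : (∑ v ∈ A, qv k w D v)
            = (∑ v ∈ A \ Sside k p.1 p.2, qv k w D v)
              + ∑ v ∈ A ∩ Sside k p.1 p.2, qv k w D v := by
          rw [← Finset.sum_union hsplit_disj, hsplit_un]
        have hkey : (degA d A : ℚ) - ∑ v ∈ A, qv k w D v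
            = ((degA d (A \ Sside k p.1 p.2) : ℚ) - ∑ v ∈ A \ Sside k p.1 p.2, qv k w D v)
              + ((degA d (A ∩ Sside k p.1 p.2) : ℚ)
                - ∑ v ∈ A ∩ Sside k p.1 p.2, qv k w D v) := by
          rw [hdadd, hqadd]
          push_cast
          ring
        have hdeltaQ : ((deltaA k (A \ Sside k p.1 p.2) : ℚ))
            + ((deltaA k (A ∩ Sside k p.1 p.2)) : ℚ) = (deltaA k A : ℚ) := by
          exact_mod_cast congrArg (Int.cast : ℤ → ℚ) hdelta
        rw [hkey]
        refine (abs_add_le _ _).trans ?_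
        linarith
      · -- no bridge side meets A : use the saturated enlargement
        push_neg at hbad
        have hAS : ∀ p ∈ CB, ∀ a ∈ A, a ∉ Sside k p.1 p.2 := by
          intro p hp a ha hmem
          exact Finset.eq_empty_iff_forall_notMem.1 (hbad p hp) a (Finset.mem_inter.2 ⟨ha, hmem⟩)
        have hcomp : ∀ a b, IsBridge k a b → a ∈ A → b ∉ A → (a, b) ∈ CB := by
          intro a b hab ha hb
          exact Finset.mem_filter.2 ⟨Finset.mem_univ _, hab, ha, hb⟩
        exact case_c hconn hsym d A CB hCBmem hcomp hAS hsat_bound hsidebound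
  refine ⟨d, (isBalanced_iff hsym hgne D d).2 ⟨htot, fun A => main A.card A le_rfl⟩, halpha⟩
end
end

section
/- Let (Γ,w) be a stable weighted graph of genus g ≥ 2, d a balanced multidegree of total degree d, and A ⊆ V a subset with d_A = m_A(d). Let B ⊆ V∖A be such that the induced sub-multigraph on B is a connected component of the induced sub-multigraph on V∖A and exactly one edge of Γ joins B to A. Then d_{A∪B} = m_{A∪B}(d). -/
open Finset

noncomputable section
open scoped Classical

variable {V : Type} [Fintype V] [DecidableEq V]

private lemma even_double_sum (k : V → V → ℕ) (hsym : ∀ u v, k u v = k v u) (s : Finset V) :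
    Even (∑ u ∈ s, ∑ v ∈ s.erase u, k u v) := by
  classical
  induction s using Finset.induction_on with
  | empty => simp
  | @insert x t hx ih =>
    rw [Finset.sum_insert hx, Finset.erase_insert hx]
    have h2 : ∀ u ∈ t, ∑ v ∈ (insert x t).erase u, k u v = k u x + ∑ v ∈ t.erase u, k u v := by
      intro u hu
      have hux : x ≠ u := fun h => hx (h ▸ hu)
      rw [Finset.erase_insert_of_ne hux,
        Finset.sum_insert (fun h => hx (Finset.mem_of_mem_erase h))]
    rw [Finset.sum_congr rfl h2, Finset.sum_add_distrib]
    have h3 : ∑ v ∈ t, k x v = ∑ u ∈ t, k u x :=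
      Finset.sum_congr rfl (fun u _ => hsym x u)
    rw [h3]
    rcases ih with ⟨c, hc⟩
    exact ⟨∑ u ∈ t, k u x + c, by omega⟩

private lemma wA_univ_eq (k : V → V → ℕ) (w : V → ℕ) (hsym : ∀ u v, k u v = k v u) :
    wA k w Finset.univ = 2 * genus k w - 2 := by
  classical
  have hev := even_double_sum k hsym (Finset.univ : Finset V)
  have hdiv : ((∑ u, ∑ v ∈ Finset.univ.erase u, k u v) / 2) * 2
      = ∑ u, ∑ v ∈ Finset.univ.erase u, k u v :=
    Nat.div_mul_cancel hev.two_dvd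
  have h := congrArg (Nat.cast : ℕ → ℤ) hdiv
  push_cast at h
  have hswap : ∑ v, ∑ u ∈ Finset.univ.erase v, (k u v : ℤ)
      = ∑ u, ∑ v ∈ Finset.univ.erase u, (k u v : ℤ) :=
    Finset.sum_congr rfl (fun v _ => Finset.sum_congr rfl (fun u _ => by rw [hsym]))
  have hlhs : wA k w Finset.univ
      = ∑ v, (2 * (w v : ℤ)) + ∑ _v : V, (-2 : ℤ) + ∑ v, (2 * (k v v : ℤ))
        + ∑ v, ∑ u ∈ Finset.univ.erase v, (k u v : ℤ) := by
    unfold wA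
    rw [← Finset.sum_add_distrib, ← Finset.sum_add_distrib, ← Finset.sum_add_distrib]
    exact Finset.sum_congr rfl (fun v _ => by ring)
  rw [hlhs, hswap]
  unfold genus numEdges
  push_cast
  simp only [Finset.sum_const, Finset.card_univ, nsmul_eq_mul, ← Finset.mul_sum]
  linarith [h]

private lemma deltaA_compl (k : V → V → ℕ) (hsym : ∀ u v, k u v = k v u) (S : Finset V) :
    deltaA k Sᶜ = deltaA k S := by
  unfold deltaA
  rw [compl_compl, Finset.sum_comm]
  exact Finset.sum_congr rfl (fun v _ => Finset.sum_congr rfl (fun u _ => by rw [hsym]))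

/-- If `d` is balanced with `d_A = m_A(d)`, and `B` is a connected
component of the complement of `A` joined to `A` by exactly one edge, then
`d_{A∪B} = m_{A∪B}(d)`. -/
theorem stmt10 (V : Type) [Fintype V] [DecidableEq V] (k : V → V → ℕ) (w : V → ℕ)
    (hsym : ∀ u v, k u v = k v u) (hstab : IsStable k w) (hg : 2 ≤ genus k w)
    (D : ℤ) (d : V → ℤ) (hbal : IsBalanced k w D d)
    (A B : Finset V) (hA : (degA d A : ℚ) = mA k w D A)
    (hBsub : B ⊆ Aᶜ) (hBconn : IsConnectedSubset k B)
    (hBcomp : ∀ u ∈ B, ∀ v : V, v ∉ A → v ∉ B → k u v = 0)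
    (hone : ∑ u ∈ B, ∑ v ∈ A, k u v = 1) :
    (degA d (A ∪ B) : ℚ) = mA k w D (A ∪ B) := by
  classical
  -- basic set facts
  have hdisj : Disjoint A B := Finset.disjoint_left.mpr
    (fun x hxA hxB => (Finset.mem_compl.mp (hBsub hxB)) hxA)
  have hAsub : A ⊆ Bᶜ := fun x hx => Finset.mem_compl.mpr
    (fun hxB => (Finset.mem_compl.mp (hBsub hxB)) hx)
  have hUc1 : Aᶜ \ B = (A ∪ B)ᶜ := by
    ext x; simp [Finset.mem_sdiff, Finset.mem_compl, Finset.mem_union]; try tauto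
  have hUc2 : Bᶜ \ A = (A ∪ B)ᶜ := by
    ext x; simp [Finset.mem_sdiff, Finset.mem_compl, Finset.mem_union]; try tauto
  -- edge counts
  have e1 : ∑ u ∈ B, ∑ v ∈ A, (k u v : ℤ) = 1 := by exact_mod_cast hone
  have eAB : ∑ u ∈ A, ∑ v ∈ B, (k u v : ℤ) = 1 := by
    rw [Finset.sum_comm]
    calc ∑ v ∈ B, ∑ u ∈ A, (k u v : ℤ) = ∑ v ∈ B, ∑ u ∈ A, (k v u : ℤ) :=
          Finset.sum_congr rfl (fun v _ => Finset.sum_congr rfl (fun u _ => by rw [hsym]))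
      _ = 1 := e1
  have hzero : ∀ u ∈ B, ∑ v ∈ (A ∪ B)ᶜ, (k u v : ℤ) = 0 := by
    intro u hu
    apply Finset.sum_eq_zero
    intro v hv
    have hv' := Finset.mem_compl.mp hv
    rw [Finset.mem_union] at hv'
    push_neg at hv'
    rw [hBcomp u hu v hv'.1 hv'.2]
    simp
  -- delta computations
  have hdB : deltaA k B = 1 := by
    unfold deltaA
    have : ∀ u ∈ B, ∑ v ∈ Bᶜ, (k u v : ℤ)
        = ∑ v ∈ (A ∪ B)ᶜ, (k u v : ℤ) + ∑ v ∈ A, (k u v : ℤ) := by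
      intro u _
      rw [← hUc2, Finset.sum_sdiff hAsub]
    rw [Finset.sum_congr rfl this, Finset.sum_add_distrib, e1,
      Finset.sum_congr rfl hzero]
    simp
  have hdU : deltaA k (A ∪ B) = deltaA k A - 1 := by
    unfold deltaA
    rw [Finset.sum_union hdisj, Finset.sum_congr rfl hzero, Finset.sum_const, smul_zero,
      add_zero]
    have : ∀ u ∈ A, ∑ v ∈ Aᶜ, (k u v : ℤ)
        = ∑ v ∈ (A ∪ B)ᶜ, (k u v : ℤ) + ∑ v ∈ B, (k u v : ℤ) := by
      intro u _
      rw [← hUc1, Finset.sum_sdiff hBsub]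
    rw [Finset.sum_congr rfl this, Finset.sum_add_distrib, eAB]
    ring
  have hdBc : deltaA k Bᶜ = 1 := by rw [deltaA_compl k hsym B, hdB]
  -- weight and degree splittings
  have hwU : wA k w (A ∪ B) = wA k w A + wA k w B := Finset.sum_union hdisj
  have hwC : wA k w Bᶜ = (2 * genus k w - 2) - wA k w B := by
    have h := Finset.sum_add_sum_compl B
      (fun v => 2 * (w v : ℤ) - 2 + 2 * (k v v : ℤ) + ∑ u ∈ Finset.univ.erase v, (k u v : ℤ))
    have h2 := wA_univ_eq k w hsym
    unfold wA at h2 ⊢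
    linarith
  have hdegU : degA d (A ∪ B) = degA d A + degA d B := Finset.sum_union hdisj
  have hdegC : degA d Bᶜ = D - degA d B := by
    have h := Finset.sum_add_sum_compl B d
    have h2 : degA d Finset.univ = D := hbal.1
    unfold degA at h2 ⊢
    linarith
  -- positivity of the denominator
  have hQpos : (0 : ℚ) < ((2 * genus k w - 2 : ℤ) : ℚ) := by
    have : (0 : ℤ) < 2 * genus k w - 2 := by linarith
    exact_mod_cast this
  have hQ : ((2 * genus k w - 2 : ℤ) : ℚ) ≠ 0 := ne_of_gt hQpos
  -- mA identities
  have m1 : mA k w D (A ∪ B) = mA k w D A + mA k w D B + 1 := by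
    unfold mA
    rw [hwU, hdU, hdB]
    push_cast <;> ring
  have hQ' : (2 * (genus k w : ℚ) - 2) ≠ 0 := by
    intro h
    apply hQ
    push_cast
    linarith [h]
  have m2 : mA k w D Bᶜ = (D : ℚ) - mA k w D B - 1 := by
    unfold mA
    rw [hwC, hdBc, hdB]
    push_cast
    have hQ'' : (genus k w : ℚ) - 1 ≠ 0 := by intro h; apply hQ'; linarith
    field_simp
    ring
  -- the two balancedness inequalities
  have hineq1 := hbal.2 (A ∪ B)
  have hineq2 := hbal.2 Bᶜ
  rw [m1] at hineq1
  rw [m2] at hineq2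
  have hc1 : (degA d (A ∪ B) : ℚ) = (degA d A : ℚ) + (degA d B : ℚ) := by
    rw [hdegU]; push_cast; ring
  have hc2 : (degA d Bᶜ : ℚ) = (D : ℚ) - (degA d B : ℚ) := by
    rw [hdegC]; push_cast; ring
  rw [hc1] at hineq1 ⊢
  rw [hc2] at hineq2
  rw [m1]
  linarith
end
end

section
/- Let (Γ,w) be a stable weighted graph of genus g ≥ 2. (i) For every connected subset A ⊆ V one has m_A(g−1) = g_A − 1, where g_A = Σ_{v∈A} w(v) + b₁(Γ_A) and Γ_A is the induced sub-multigraph on A; in particular m_A(g−1) is an integer. (ii) If Γ has at least two vertices, then (Γ,w) is (g−1)-special: there exists a balanced multidegree of total degree g−1 that is not strictly balanced. -/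
open Finset

noncomputable section
open scoped Classical

variable {V : Type} [Fintype V] [DecidableEq V]

section Aux12
variable {V : Type} [Fintype V] [DecidableEq V]

lemma aux_erase_split [LinearOrder V] (A : Finset V) (u : V) :
    A.erase u = A.filter (· < u) ∪ A.filter (u < ·) := by
  ext v
  simp only [Finset.mem_erase, Finset.mem_union, Finset.mem_filter]
  constructor
  · rintro ⟨hne, hv⟩
    rcases lt_or_gt_of_ne hne with h | h
    · exact Or.inl ⟨hv, h⟩
    · exact Or.inr ⟨hv, h⟩
  · rintro (⟨hv, h⟩ | ⟨hv, h⟩)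
    · exact ⟨ne_of_lt h, hv⟩
    · exact ⟨ne_of_gt h, hv⟩

lemma aux_mirror1 {M : Type*} [AddCommMonoid M] [LinearOrder V] (f : V → V → M)
    (hf : ∀ u v, f u v = f v u) (A : Finset V) :
    (∑ u ∈ A, ∑ v ∈ A.filter (· < u), f u v) = ∑ u ∈ A, ∑ v ∈ A.filter (u < ·), f u v := by
  rw [Finset.sum_comm' (s := A) (t := fun u => A.filter (· < u)) (t' := A)
      (s' := fun v => A.filter (v < ·)) (by intro x y; simp only [Finset.mem_filter]; tauto)]
  exact Finset.sum_congr rfl fun y _ => Finset.sum_congr rfl fun x _ => hf x y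

lemma aux_mirror2 {M : Type*} [AddCommMonoid M] [LinearOrder V] (f : V → V → M)
    (A : Finset V) :
    (∑ v ∈ A, ∑ u ∈ A.filter (· < v), f u v) = ∑ u ∈ A, ∑ v ∈ A.filter (u < ·), f u v := by
  exact Finset.sum_comm' (s := A) (t := fun v => A.filter (· < v)) (t' := A)
      (s' := fun u => A.filter (u < ·)) (by intro x y; simp only [Finset.mem_filter]; tauto)
      (f := fun v u => f u v)

lemma aux_filter_disj [LinearOrder V] (A : Finset V) (u : V) :
    Disjoint (A.filter (· < u)) (A.filter (u < ·)) := by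
  rw [Finset.disjoint_left]
  intro v hv1 hv2
  simp only [Finset.mem_filter] at hv1 hv2
  exact absurd hv2.2 (not_lt.mpr hv1.2.le)

lemma aux_S_eq_two_T [LinearOrder V] (k : V → V → ℕ) (hsym : ∀ u v, k u v = k v u)
    (A : Finset V) :
    (∑ u ∈ A, ∑ v ∈ A.erase u, k u v) = 2 * ∑ u ∈ A, ∑ v ∈ A.filter (u < ·), k u v := by
  have h1 : (∑ u ∈ A, ∑ v ∈ A.erase u, k u v)
      = (∑ u ∈ A, ∑ v ∈ A.filter (· < u), k u v)
        + ∑ u ∈ A, ∑ v ∈ A.filter (u < ·), k u v := by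
    rw [← Finset.sum_add_distrib]
    exact Finset.sum_congr rfl fun u _ => by
      rw [aux_erase_split A u, Finset.sum_union (aux_filter_disj A u)]
  rw [h1, aux_mirror1 k hsym A, two_mul]

lemma aux_numEdgesIn_eq [LinearOrder V] (k : V → V → ℕ) (hsym : ∀ u v, k u v = k v u)
    (A : Finset V) :
    numEdgesIn k A = (∑ v ∈ A, k v v) + ∑ u ∈ A, ∑ v ∈ A.filter (u < ·), k u v := by
  rw [numEdgesIn, aux_S_eq_two_T k hsym A, Nat.mul_div_cancel_left _ (by norm_num)]

lemma aux_univ_erase_split (A : Finset V) (v : V) (hv : v ∈ A) :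
    (Finset.univ.erase v) = A.erase v ∪ Aᶜ := by
  ext u
  simp only [Finset.mem_erase, Finset.mem_union, Finset.mem_compl, Finset.mem_univ, and_true]
  constructor
  · intro hne
    by_cases h : u ∈ A
    · exact Or.inl ⟨hne, h⟩
    · exact Or.inr h
  · rintro (⟨hne, _⟩ | h)
    · exact hne
    · exact fun he => h (he ▸ hv)

lemma aux_erase_compl_disj (A : Finset V) (v : V) :
    Disjoint (A.erase v) Aᶜ := by
  rw [Finset.disjoint_left]
  intro u hu hu2
  exact (Finset.mem_compl.mp hu2) (Finset.mem_of_mem_erase hu)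

lemma aux_wA_eq (k : V → V → ℕ) (w : V → ℕ) (hsym : ∀ u v, k u v = k v u) (A : Finset V) :
    wA k w A = 2 * (∑ v ∈ A, (w v : ℤ)) - 2 * A.card + 2 * (∑ v ∈ A, (k v v : ℤ))
      + (∑ u ∈ A, ∑ v ∈ A.erase u, (k u v : ℤ)) + deltaA k A := by
  have hswap : ∀ B : Finset V, (∑ v ∈ A, ∑ u ∈ B, (k u v : ℤ)) = ∑ v ∈ A, ∑ u ∈ B, (k v u : ℤ) :=
    fun B => Finset.sum_congr rfl fun v _ => Finset.sum_congr rfl fun u _ => by rw [hsym]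
  have h1 : wA k w A = ∑ v ∈ A, (2 * (w v : ℤ) - 2 + 2 * (k v v : ℤ)
      + ((∑ u ∈ A.erase v, (k u v : ℤ)) + ∑ u ∈ Aᶜ, (k u v : ℤ))) := by
    refine Finset.sum_congr rfl fun v hv => ?_
    rw [aux_univ_erase_split A v hv, Finset.sum_union (aux_erase_compl_disj A v)]
  rw [h1]
  simp only [Finset.sum_add_distrib, Finset.sum_sub_distrib, Finset.sum_const, nsmul_eq_mul]
  have h2 : (∑ v ∈ A, ∑ u ∈ A.erase v, (k u v : ℤ)) = ∑ u ∈ A, ∑ v ∈ A.erase u, (k u v : ℤ) := by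
    rw [Finset.sum_congr rfl fun v _ => Finset.sum_congr rfl fun u _ => by rw [hsym]]
  have h3 : (∑ v ∈ A, ∑ u ∈ Aᶜ, (k u v : ℤ)) = deltaA k A := by
    rw [deltaA, Finset.sum_congr rfl fun v _ => Finset.sum_congr rfl fun u _ => by rw [hsym]]
  rw [h2, h3, Finset.mul_sum, Finset.mul_sum]
  ring

lemma aux_key (k : V → V → ℕ) (w : V → ℕ) (hsym : ∀ u v, k u v = k v u) (A : Finset V) :
    wA k w A - deltaA k A
      = 2 * ((∑ v ∈ A, (w v : ℤ)) + (numEdgesIn k A : ℤ) - A.card) := by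
  letI : LinearOrder V := LinearOrder.lift' (Fintype.equivFin V) (Fintype.equivFin V).injective
  have hE : (numEdgesIn k A : ℤ)
      = (∑ v ∈ A, (k v v : ℤ)) + ∑ u ∈ A, ∑ v ∈ A.filter (u < ·), (k u v : ℤ) := by
    rw [aux_numEdgesIn_eq k hsym A]; push_cast; ring
  have hS : (∑ u ∈ A, ∑ v ∈ A.erase u, (k u v : ℤ))
      = 2 * ∑ u ∈ A, ∑ v ∈ A.filter (u < ·), (k u v : ℤ) := by
    have := aux_S_eq_two_T k hsym A
    have h := congrArg (fun n : ℕ => (n : ℤ)) this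
    push_cast at h
    exact h
  rw [aux_wA_eq k w hsym A, hE, hS]
  ring

lemma aux_mA_eq (k : V → V → ℕ) (w : V → ℕ) (hsym : ∀ u v, k u v = k v u)
    (hg : 2 ≤ genus k w) (A : Finset V) :
    mA k w (genus k w - 1) A
      = (((∑ v ∈ A, (w v : ℤ)) + (numEdgesIn k A : ℤ) - A.card : ℤ) : ℚ) := by
  have hg1 : ((genus k w : ℚ) - 1) ≠ 0 := by
    have : (2 : ℚ) ≤ (genus k w : ℚ) := by exact_mod_cast hg
    linarith
  have hkey := aux_key k w hsym A
  have hkeyQ : ((wA k w A : ℚ)) - (deltaA k A : ℚ)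
      = 2 * ((∑ v ∈ A, (w v : ℤ)) + (numEdgesIn k A : ℤ) - A.card : ℤ) := by
    exact_mod_cast congrArg (fun n : ℤ => (n : ℚ)) hkey
  have hdiv : ((genus k w - 1 : ℤ) : ℚ) * (wA k w A : ℚ) / ((2 * genus k w - 2 : ℤ) : ℚ)
      = (wA k w A : ℚ) / 2 := by
    have e1 : ((genus k w - 1 : ℤ) : ℚ) = (genus k w : ℚ) - 1 := by push_cast; ring
    have e2 : ((2 * genus k w - 2 : ℤ) : ℚ) = ((genus k w : ℚ) - 1) * 2 := by push_cast; ring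
    rw [e1, e2, ← mul_div_mul_left ((wA k w A : ℚ)) 2 hg1]
  rw [mA, hdiv]
  push_cast at hkeyQ ⊢
  linarith

end Aux12

/-- (i) for every connected `A ⊆ V`, `m_A(g−1) = g_A − 1` where
`g_A = Σ_{v∈A} w(v) + b₁(Γ_A)`; (ii) if `Γ` has at least two vertices then
`(Γ,w)` is `(g−1)`-special. -/
theorem stmt12 (V : Type) [Fintype V] [DecidableEq V] (k : V → V → ℕ) (w : V → ℕ)
    (hsym : ∀ u v, k u v = k v u) (hstab : IsStable k w) (hg : 2 ≤ genus k w) :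
    (∀ A : Finset V, IsConnectedSubset k A →
      mA k w (genus k w - 1) A =
        (((∑ v ∈ A, (w v : ℤ)) + ((numEdgesIn k A : ℤ) - (A.card : ℤ) + 1) - 1 : ℤ) : ℚ)) ∧
    (2 ≤ Fintype.card V →
      ∃ d : V → ℤ, IsBalanced k w (genus k w - 1) d ∧
        ¬ IsStrictlyBalanced k w (genus k w - 1) d) := by
  have key := aux_mA_eq k w hsym hg
  constructor
  · intro A _
    rw [key A]
    push_cast
    ring
  · intro hcard
    letI : LinearOrder V := LinearOrder.lift' (Fintype.equivFin V) (Fintype.equivFin V).injective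
    haveI : Nonempty V := Fintype.card_pos_iff.mp (by omega)
    set d : V → ℤ := fun v =>
      (w v : ℤ) - 1 + (k v v : ℤ) + ∑ u ∈ Finset.univ.filter (· < v), (k u v : ℤ) with hd
    have hdeg : ∀ A : Finset V, degA d A
        = ((∑ v ∈ A, (w v : ℤ)) + (numEdgesIn k A : ℤ) - A.card)
          + ∑ v ∈ A, ∑ u ∈ Aᶜ.filter (· < v), (k u v : ℤ) := by
      intro A
      have hsplit : ∀ v : V, (Finset.univ.filter (· < v)) = A.filter (· < v) ∪ Aᶜ.filter (· < v) := by
        intro v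
        ext u
        simp only [Finset.mem_filter, Finset.mem_union, Finset.mem_univ, true_and,
          Finset.mem_compl]
        by_cases h : u ∈ A <;> tauto
      have hdisj : ∀ v : V, Disjoint (A.filter (· < v)) (Aᶜ.filter (· < v)) := by
        intro v
        rw [Finset.disjoint_left]
        intro u hu1 hu2
        simp only [Finset.mem_filter, Finset.mem_compl] at hu1 hu2
        exact hu2.1 hu1.1
      have h1 : degA d A = ∑ v ∈ A, ((w v : ℤ) - 1 + (k v v : ℤ)
          + ((∑ u ∈ A.filter (· < v), (k u v : ℤ)) + ∑ u ∈ Aᶜ.filter (· < v), (k u v : ℤ))) := by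
        refine Finset.sum_congr rfl fun v _ => ?_
        simp only [hd]
        rw [hsplit v, Finset.sum_union (hdisj v)]
      rw [h1]
      simp only [Finset.sum_add_distrib, Finset.sum_sub_distrib, Finset.sum_const,
        nsmul_eq_mul, mul_one]
      rw [aux_mirror2 (fun u v => (k u v : ℤ)) A]
      have hE : (numEdgesIn k A : ℤ)
          = (∑ v ∈ A, (k v v : ℤ)) + ∑ u ∈ A, ∑ v ∈ A.filter (u < ·), (k u v : ℤ) := by
        rw [aux_numEdgesIn_eq k hsym A]; push_cast; ring
      rw [hE]
      ring
    have hbal : IsBalanced k w (genus k w - 1) d := by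
      constructor
      · have := hdeg Finset.univ
        rw [degA] at this ⊢
        rw [this]
        have hcompl : (Finset.univ : Finset V)ᶜ = ∅ := by simp
        rw [hcompl]
        simp only [Finset.filter_empty, Finset.sum_empty, Finset.sum_const_zero, add_zero]
        have hnum : numEdgesIn k Finset.univ = numEdges k := by
          rw [numEdgesIn, numEdges]
        rw [hnum, genus, Finset.card_univ]
        ring
      · intro A
        rw [key A, hdeg A]
        push_cast
        have : (0:ℚ) ≤ ((∑ v ∈ A, ∑ u ∈ Aᶜ.filter (· < v), (k u v : ℤ) : ℤ) : ℚ) := by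
          have : (0:ℤ) ≤ ∑ v ∈ A, ∑ u ∈ Aᶜ.filter (· < v), (k u v : ℤ) :=
            Finset.sum_nonneg fun v _ => Finset.sum_nonneg fun u _ => Int.natCast_nonneg _
          exact_mod_cast this
        push_cast at this
        linarith
    refine ⟨d, hbal, ?_⟩
    rintro ⟨_, hstrict⟩
    obtain ⟨M, -, hM⟩ := Finset.exists_max_image (Finset.univ : Finset V) id Finset.univ_nonempty
    set A : Finset V := Finset.univ.erase M with hA
    have hAne : A ≠ ∅ := by
      have h1 : 0 < A.card := by
        rw [hA, Finset.card_erase_of_mem (Finset.mem_univ M), Finset.card_univ]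
        omega
      exact (Finset.card_pos.mp h1).ne_empty
    have hAuniv : A ≠ Finset.univ := by
      intro h
      have : M ∈ A := h ▸ Finset.mem_univ M
      exact (Finset.notMem_erase M _) (hA ▸ this)
    have hzero : (∑ v ∈ A, ∑ u ∈ Aᶜ.filter (· < v), (k u v : ℤ)) = 0 := by
      refine Finset.sum_eq_zero fun v hv => ?_
      refine Finset.sum_eq_zero fun u hu => ?_
      exfalso
      simp only [Finset.mem_filter, Finset.mem_compl, hA, Finset.mem_erase, Finset.mem_univ,
        and_true, not_and, not_not] at hu hv
      have hle : v ≤ M := by simpa using hM v (Finset.mem_univ v)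
      have hMv : M < v := by rw [← hu.1]; exact hu.2
      exact absurd hMv (not_lt.mpr hle)
    have heq : mA k w (genus k w - 1) A = (degA d A : ℚ) := by
      rw [key A, hdeg A, hzero]
      push_cast
      ring
    exact absurd (hstrict A hAne hAuniv) (by rw [heq]; exact lt_irrefl _)

end
end

section
/- Let (Γ,w) be a stable weighted graph of genus g ≥ 2. Then (Γ,w) is weakly (g−1)-general if and only if (Γ,w) is tree-like, i.e. every edge of Γ joining two distinct vertices is a bridge. -/
open Finset

noncomputable section
open scoped Classical

variable {V : Type} [Fintype V] [DecidableEq V]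

/-! ### Auxiliary development for stmt13 -/

section Aux13

variable {k : V → V → ℕ}

lemma removeEdge_comm' (k : V → V → ℕ) (a b : V) : removeEdge k a b = removeEdge k b a := by
  funext u v
  simp only [removeEdge]
  exact if_congr or_comm rfl rfl

lemma isBridge_symm (hsym : ∀ u v, k u v = k v u) {a b : V}
    (h : IsBridge k a b) : IsBridge k b a :=
  ⟨h.1.symm, (hsym b a).trans h.2.1, by rw [removeEdge_comm']; exact h.2.2⟩

/-- The bridge graph: `u ~ v` iff they are joined by a bridge. -/
def BG (k : V → V → ℕ) : SimpleGraph V where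
  Adj u v := IsBridge k u v ∨ IsBridge k v u
  symm := ⟨fun _ _ h => h.symm⟩
  loopless := ⟨fun _ h => h.elim (fun h' => h'.1 rfl) (fun h' => h'.1 rfl)⟩

lemma BG_adj_bridge (hsym : ∀ u v, k u v = k v u) {a b : V}
    (h : (BG k).Adj a b) : IsBridge k a b :=
  h.elim id (isBridge_symm hsym)

lemma eqvGen_of_reachable {u v : V} (h : (BG k).Reachable u v) :
    Relation.EqvGen (fun a b => IsBridge k a b) u v := by
  obtain ⟨p⟩ := h
  induction p with
  | nil => exact Relation.EqvGen.refl _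
  | cons hadj _ ih =>
    refine Relation.EqvGen.trans _ _ _ ?_ ih
    rcases hadj with h' | h'
    · exact Relation.EqvGen.rel _ _ h'
    · exact Relation.EqvGen.symm _ _ (Relation.EqvGen.rel _ _ h')

lemma reachable_of_eqvGen {u v : V}
    (h : Relation.EqvGen (fun a b => IsBridge k a b) u v) : (BG k).Reachable u v := by
  induction h with
  | rel a b hab => exact SimpleGraph.Adj.reachable (Or.inl hab)
  | refl a => exact SimpleGraph.Reachable.refl a
  | symm a b _ ih => exact ih.symm
  | trans a b c _ _ ih1 ih2 => exact ih1.trans ih2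

lemma removeEdge_eq_of_ne {a b u v : V}
    (h : ¬((u = a ∧ v = b) ∨ (u = b ∧ v = a))) : removeEdge k a b u v = k u v := by
  simp only [removeEdge, if_neg h]

lemma walk_avoiding_reachable {a b x y : V} (q : (BG k).Walk x y)
    (hq : ∀ e ∈ q.edges, e ≠ s(a, b)) :
    (graphOf (removeEdge k a b)).Reachable x y := by
  induction q with
  | nil => exact SimpleGraph.Reachable.refl _
  | @cons u x' y' hadj p ih =>
    have he : s(u, x') ≠ s(a, b) := hq _ (by simp)
    have hne : u ≠ x' := (BG k).ne_of_adj hadj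
    have hcond : ¬((u = a ∧ x' = b) ∨ (u = b ∧ x' = a)) := by
      rintro (⟨rfl, rfl⟩ | ⟨rfl, rfl⟩)
      · exact he rfl
      · exact he Sym2.eq_swap
    have hcond' : ¬((x' = a ∧ u = b) ∨ (x' = b ∧ u = a)) := by tauto
    have hpos : 0 < removeEdge k a b u x' ∨ 0 < removeEdge k a b x' u := by
      rw [removeEdge_eq_of_ne hcond, removeEdge_eq_of_ne hcond']
      rcases hadj with h' | h'
      · exact Or.inl (by rw [h'.2.1]; norm_num)
      · exact Or.inr (by rw [h'.2.1]; norm_num)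
    have hadj' : (graphOf (removeEdge k a b)).Adj u x' := ⟨hne, hpos⟩
    exact hadj'.reachable.trans (ih fun e hem => hq e (by simp [hem]))

lemma removed_connected (hconn : (graphOf k).Connected) (a b : V)
    (hre : (graphOf (removeEdge k a b)).Reachable a b) :
    (graphOf (removeEdge k a b)).Connected := by
  rw [SimpleGraph.connected_iff]
  refine ⟨fun x y => ?_, hconn.nonempty⟩
  obtain ⟨p⟩ := hconn.preconnected x y
  induction p with
  | nil => exact SimpleGraph.Reachable.refl _
  | @cons u x' y' hadj p ih =>
    refine SimpleGraph.Reachable.trans ?_ ih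
    by_cases hc : (u = a ∧ x' = b) ∨ (u = b ∧ x' = a)
    · rcases hc with ⟨rfl, rfl⟩ | ⟨rfl, rfl⟩
      · exact hre
      · exact hre.symm
    · have hc' : ¬((x' = a ∧ u = b) ∨ (x' = b ∧ u = a)) := by tauto
      refine SimpleGraph.Adj.reachable ⟨hadj.1, ?_⟩
      rw [removeEdge_eq_of_ne hc, removeEdge_eq_of_ne hc']
      exact hadj.2

lemma not_eqvGen_of_adj_not_bridge (hsym : ∀ u v, k u v = k v u)
    (hconn : (graphOf k).Connected) {u v : V} (hne : u ≠ v) (hk : 0 < k u v)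
    (hnb : ¬ IsBridge k u v)
    (h : Relation.EqvGen (fun a b => IsBridge k a b) u v) : False := by
  obtain ⟨p0⟩ := reachable_of_eqvGen h
  obtain ⟨p, hp⟩ : ∃ p : (BG k).Walk u v, p.IsPath := ⟨p0.bypass, p0.bypass_isPath⟩
  cases p with
  | nil => exact hne rfl
  | @cons _ x₁ _ hadj q =>
    have hbr : IsBridge k u x₁ := BG_adj_bridge hsym hadj
    by_cases hxv : x₁ = v
    · subst hxv; exact hnb hbr
    · rw [SimpleGraph.Walk.cons_isPath_iff] at hp
      have hq : ∀ e ∈ q.edges, e ≠ s(u, x₁) := by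
        intro e hem heq
        subst heq
        exact hp.2 (q.fst_mem_support_of_mem_edges hem)
      have r1 : (graphOf (removeEdge k u x₁)).Reachable x₁ v :=
        walk_avoiding_reachable q hq
      have r2 : (graphOf (removeEdge k u x₁)).Adj u v := by
        refine ⟨hne, Or.inl ?_⟩
        rw [removeEdge_eq_of_ne ?_]
        · exact hk
        · rintro (⟨-, h'⟩ | ⟨h', -⟩)
          · exact hxv h'.symm
          · exact hbr.1 h'
      exact hbr.2.2 (removed_connected hconn u x₁ (r2.reachable.trans r1.symm))

lemma quot_ne_of_adj_not_bridge (hsym : ∀ u v, k u v = k v u)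
    (hconn : (graphOf k).Connected) {u v : V} (hne : u ≠ v) (hk : 0 < k u v)
    (hnb : ¬ IsBridge k u v) :
    Quotient.mk (contractSetoid k) u ≠ Quotient.mk (contractSetoid k) v :=
  fun h => not_eqvGen_of_adj_not_bridge hsym hconn hne hk hnb (Quotient.exact h)

lemma v2_eq_of_treelike (hconn : (graphOf k).Connected)
    (htree : ∀ u v : V, u ≠ v → 0 < k u v → IsBridge k u v) (c c' : V2 k) : c = c' := by
  obtain ⟨x, rfl⟩ := Quotient.exists_rep c
  obtain ⟨y, rfl⟩ := Quotient.exists_rep c'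
  obtain ⟨p⟩ := hconn.preconnected x y
  refine Quotient.sound ?_
  induction p with
  | nil => exact Relation.EqvGen.refl _
  | @cons a b cc hadj p ih =>
    refine Relation.EqvGen.trans _ _ _ ?_ ih
    rcases hadj.2 with hpos | hpos
    · exact Relation.EqvGen.rel _ _ (htree _ _ hadj.1 hpos)
    · exact Relation.EqvGen.symm _ _ (Relation.EqvGen.rel _ _ (htree _ _ (Ne.symm hadj.1) hpos))

lemma bg_acyclic (hsym : ∀ u v, k u v = k v u) (hconn : (graphOf k).Connected) :
    (BG k).IsAcyclic := by
  intro v c hc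
  cases c with
  | nil => exact hc.ne_nil rfl
  | @cons _ x₁ _ hadj q =>
    rw [SimpleGraph.Walk.cons_isCycle_iff] at hc
    have hbr : IsBridge k v x₁ := BG_adj_bridge hsym hadj
    have hq : ∀ e ∈ q.edges, e ≠ s(v, x₁) := fun e hem heq => hc.2 (heq ▸ hem)
    have r1 : (graphOf (removeEdge k v x₁)).Reachable x₁ v :=
      walk_avoiding_reachable q hq
    exact hbr.2.2 (removed_connected hconn v x₁ r1.symm)

end Aux13

section Aux13b

variable {k : V → V → ℕ}

lemma mem_fiber {v : V} {c : V2 k} :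
    v ∈ fiber k c ↔ Quotient.mk (contractSetoid k) v = c := by
  simp [fiber]

lemma sum_fibers {M : Type} [AddCommMonoid M] (k : V → V → ℕ) (g : V → M) :
    ∑ c : V2 k, ∑ v ∈ fiber k c, g v = ∑ v, g v := by
  have h1 : ∀ c : V2 k, ∑ v ∈ fiber k c, g v
      = ∑ v, if Quotient.mk (contractSetoid k) v = c then g v else 0 := by
    intro c
    unfold fiber
    rw [Finset.sum_filter]
  rw [Finset.sum_congr rfl fun c _ => h1 c, Finset.sum_comm]
  refine Finset.sum_congr rfl fun v _ => ?_
  have hs := Finset.sum_eq_single_of_mem (s := (Finset.univ : Finset (V2 k)))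
    (f := fun c : V2 k => if Quotient.mk (contractSetoid k) v = c then g v else 0)
    (Quotient.mk (contractSetoid k) v) (Finset.mem_univ _)
    (fun b _ hb => if_neg (fun h => hb h.symm))
  rw [hs]
  exact if_pos rfl

lemma quot_eq_of_bridge {u v : V} (h : IsBridge k u v) :
    Quotient.mk (contractSetoid k) u = Quotient.mk (contractSetoid k) v :=
  Quotient.sound (Relation.EqvGen.rel _ _ h)

lemma sum_erase_ite {α M : Type} [Fintype α] [DecidableEq α] [AddCommMonoid M]
    (a : α) (f : α → M) :
    ∑ x ∈ Finset.univ.erase a, f x = ∑ x, if x = a then 0 else f x := by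
  rw [← Finset.filter_ne']
  rw [Finset.sum_filter]
  refine Finset.sum_congr rfl fun x _ => ?_
  by_cases h : x = a <;> simp [h]

lemma sum_pairs_comm {α M : Type} [DecidableEq α] [AddCommMonoid M]
    (A : Finset α) (f : α → α → M) :
    ∑ u ∈ A, ∑ v ∈ A.erase u, f u v = ∑ v ∈ A, ∑ u ∈ A.erase v, f u v :=
  Finset.sum_comm' (by
    intro x y
    simp only [Finset.mem_erase]
    tauto)

lemma sum_pairs_split {α M : Type} [DecidableEq α] [AddCommMonoid M]
    (r : α → ℕ) (hr : Function.Injective r) (A : Finset α) (f : α → α → M) :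
    ∑ u ∈ A, ∑ v ∈ A.erase u, f u v
      = (∑ u ∈ A, ∑ v ∈ A.erase u, if r v < r u then f u v else 0)
        + (∑ u ∈ A, ∑ v ∈ A.erase u, if r v < r u then f v u else 0) := by
  have step1 : ∑ u ∈ A, ∑ v ∈ A.erase u, f u v
      = (∑ u ∈ A, ∑ v ∈ A.erase u, if r v < r u then f u v else 0)
        + (∑ u ∈ A, ∑ v ∈ A.erase u, if r u < r v then f u v else 0) := by
    rw [← Finset.sum_add_distrib]
    refine Finset.sum_congr rfl fun u _ => ?_
    rw [← Finset.sum_add_distrib]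
    refine Finset.sum_congr rfl fun v hv => ?_
    have hvu : v ≠ u := (Finset.mem_erase.mp hv).1
    have hrne : r v ≠ r u := fun h => hvu (hr h)
    rcases lt_or_gt_of_ne hrne with h | h
    · rw [if_pos h, if_neg (not_lt.mpr h.le), add_zero]
    · rw [if_neg (not_lt.mpr h.le), if_pos h, zero_add]
  have step2 : ∑ u ∈ A, ∑ v ∈ A.erase u, (if r u < r v then f u v else 0)
      = ∑ u ∈ A, ∑ v ∈ A.erase u, (if r v < r u then f v u else 0) :=
    sum_pairs_comm A (fun u v => if r u < r v then f u v else 0)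
  rw [step1, step2]

lemma even_pair_sum {α : Type} [Fintype α] [DecidableEq α]
    (f : α → α → ℕ) (hs : ∀ u v, f u v = f v u) (A : Finset α) :
    ∃ t : ℕ, ∑ u ∈ A, ∑ v ∈ A.erase u, f u v = 2 * t := by
  obtain ⟨r, hr⟩ : ∃ r : α → ℕ, Function.Injective r :=
    ⟨fun v => (Fintype.equivFin α v).val, fun a b h => by
      apply (Fintype.equivFin α).injective
      exact Fin.ext h⟩
  refine ⟨∑ u ∈ A, ∑ v ∈ A.erase u, if r v < r u then f u v else 0, ?_⟩
  rw [sum_pairs_split r hr A f, two_mul]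
  congr 1
  exact Finset.sum_congr rfl fun u _ => Finset.sum_congr rfl fun v _ => by
    by_cases h : r v < r u <;> simp [h, hs u v]

lemma fiber_erase (c : V2 k) (u : V) :
    (fiber k c).erase u
      = (Finset.univ.erase u).filter (fun v => Quotient.mk (contractSetoid k) v = c) := by
  ext v
  simp only [fiber, Finset.mem_erase, Finset.mem_filter, Finset.mem_univ, true_and]
  tauto

lemma sum_fiber_pairs {M : Type} [AddCommMonoid M] (k : V → V → ℕ) (g : V → V → M) :
    ∑ c : V2 k, ∑ u ∈ fiber k c, ∑ v ∈ (fiber k c).erase u, g u v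
      = ∑ u, ∑ v ∈ Finset.univ.erase u,
          if Quotient.mk (contractSetoid k) v = Quotient.mk (contractSetoid k) u
          then g u v else 0 := by
  rw [← sum_fibers k (fun u => ∑ v ∈ Finset.univ.erase u,
      if Quotient.mk (contractSetoid k) v = Quotient.mk (contractSetoid k) u then g u v else 0)]
  refine Finset.sum_congr rfl fun c _ => Finset.sum_congr rfl fun u hu => ?_
  rw [fiber_erase, Finset.sum_filter, mem_fiber.mp hu]
  congr!

lemma sum_cross_pairs {M : Type} [AddCommMonoid M] (k : V → V → ℕ) (g : V → V → M) :
    ∑ c : V2 k, ∑ c' ∈ Finset.univ.erase c, ∑ u ∈ fiber k c', ∑ v ∈ fiber k c, g u v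
      = ∑ u, ∑ v ∈ Finset.univ.erase u,
          if Quotient.mk (contractSetoid k) v = Quotient.mk (contractSetoid k) u
          then 0 else g u v := by
  have step1 : ∀ c : V2 k,
      ∑ c' ∈ Finset.univ.erase c, ∑ u ∈ fiber k c', ∑ v ∈ fiber k c, g u v
        = ∑ u, (if Quotient.mk (contractSetoid k) u = c then 0
            else ∑ v ∈ fiber k c, g u v) := by
    intro c
    rw [sum_erase_ite]
    rw [← sum_fibers k (fun u => if Quotient.mk (contractSetoid k) u = c then 0
        else ∑ v ∈ fiber k c, g u v)]
    refine Finset.sum_congr rfl fun c' _ => ?_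
    by_cases h : c' = c
    · subst h
      rw [if_pos rfl]
      rw [Finset.sum_congr rfl (fun u hu => by rw [if_pos (mem_fiber.mp hu)])]
      simp
    · rw [if_neg h]
      refine Finset.sum_congr rfl fun u hu => ?_
      rw [if_neg (by rw [mem_fiber.mp hu]; exact h)]
  calc ∑ c : V2 k, ∑ c' ∈ Finset.univ.erase c, ∑ u ∈ fiber k c', ∑ v ∈ fiber k c, g u v
      = ∑ c : V2 k, ∑ u, (if Quotient.mk (contractSetoid k) u = c then 0
          else ∑ v ∈ fiber k c, g u v) := Finset.sum_congr rfl fun c _ => step1 c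
    _ = ∑ u, ∑ c : V2 k, (if Quotient.mk (contractSetoid k) u = c then 0
          else ∑ v ∈ fiber k c, g u v) := Finset.sum_comm
    _ = ∑ u, ∑ c : V2 k, ∑ v ∈ fiber k c,
          (if Quotient.mk (contractSetoid k) u = c then 0 else g u v) := by
        refine Finset.sum_congr rfl fun u _ => Finset.sum_congr rfl fun c _ => ?_
        by_cases h : Quotient.mk (contractSetoid k) u = c <;> simp [h]
    _ = ∑ u, ∑ c : V2 k, ∑ v ∈ fiber k c,
          (if Quotient.mk (contractSetoid k) u = Quotient.mk (contractSetoid k) v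
            then 0 else g u v) := by
        refine Finset.sum_congr rfl fun u _ => Finset.sum_congr rfl fun c _ =>
          Finset.sum_congr rfl fun v hv => ?_
        rw [mem_fiber.mp hv]
        congr
    _ = ∑ u, ∑ v,
          (if Quotient.mk (contractSetoid k) u = Quotient.mk (contractSetoid k) v
            then 0 else g u v) := by
        refine Finset.sum_congr rfl fun u _ => ?_
        exact sum_fibers k _
    _ = ∑ u, ∑ v ∈ Finset.univ.erase u,
          if Quotient.mk (contractSetoid k) v = Quotient.mk (contractSetoid k) u
          then 0 else g u v := by
        refine Finset.sum_congr rfl fun u _ => ?_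
        rw [sum_erase_ite]
        refine Finset.sum_congr rfl fun v _ => ?_
        by_cases hvu : v = u
        · subst hvu; simp
        · rw [if_neg hvu]
          exact if_congr eq_comm rfl rfl

end Aux13b

section Aux13c

variable {k : V → V → ℕ}

lemma fiber_closed_adj {c : V2 k} {u v : V} (hu : u ∈ fiber k c)
    (h : (BG k).Adj u v) : v ∈ fiber k c := by
  rw [mem_fiber] at hu ⊢
  rcases h with h' | h'
  · exact (quot_eq_of_bridge h').symm.trans hu
  · exact (quot_eq_of_bridge h').trans hu

lemma induced_reachable {c : V2 k} {x y : V} (p : (BG k).Walk x y)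
    (hx : x ∈ fiber k c) :
    ∃ hy : y ∈ fiber k c,
      ((BG k).induce (↑(fiber k c) : Set V)).Reachable
        ⟨x, by simpa using hx⟩ ⟨y, by simpa using hy⟩ := by
  induction p with
  | nil => exact ⟨hx, SimpleGraph.Reachable.refl _⟩
  | @cons a b cc hadj p ih =>
    have hb : b ∈ fiber k c := fiber_closed_adj hx hadj
    obtain ⟨hy, hre⟩ := ih hb
    refine ⟨hy, SimpleGraph.Reachable.trans ?_ hre⟩
    refine SimpleGraph.Adj.reachable ?_
    simpa using hadj

lemma fiber_tree (hsym : ∀ u v, k u v = k v u) (hconn : (graphOf k).Connected)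
    (c : V2 k) : ((BG k).induce (↑(fiber k c) : Set V)).IsTree := by
  constructor
  · rw [SimpleGraph.connected_iff]
    constructor
    · rintro ⟨x, hx⟩ ⟨y, hy⟩
      have hx' : x ∈ fiber k c := by simpa using hx
      have hy' : y ∈ fiber k c := by simpa using hy
      have heq : Relation.EqvGen (fun a b => IsBridge k a b) x y := by
        have h1 : Quotient.mk (contractSetoid k) x = c := mem_fiber.mp hx'
        have h2 : Quotient.mk (contractSetoid k) y = c := mem_fiber.mp hy'
        exact Quotient.exact (h1.trans h2.symm)
      obtain ⟨p⟩ := reachable_of_eqvGen heq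
      obtain ⟨hy2, hre⟩ := induced_reachable p hx'
      exact hre
    · obtain ⟨x, hx⟩ := Quotient.exists_rep c
      exact ⟨⟨x, by simpa using mem_fiber.mpr hx⟩⟩
  · intro v cyc hcyc
    have hinj : Function.Injective
        ((SimpleGraph.Embedding.induce (G := BG k) (↑(fiber k c) : Set V)).toHom : _ → V) :=
      Subtype.val_injective
    exact bg_acyclic hsym hconn _
      ((SimpleGraph.Walk.map_isCycle_iff_of_injective hinj).mpr hcyc)

lemma fiber_card (hsym : ∀ u v, k u v = k v u) (hconn : (graphOf k).Connected)
    (c : V2 k) :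
    2 * (fiber k c).card
      = (∑ u ∈ fiber k c, ∑ v ∈ (fiber k c).erase u,
          if IsBridge k u v then 1 else 0) + 2 := by
  classical
  have htree := fiber_tree hsym hconn c
  set G' := (BG k).induce (↑(fiber k c) : Set V) with hG'
  have hcard : G'.edgeFinset.card + 1 = Fintype.card (↥(↑(fiber k c) : Set V)) :=
    htree.card_edgeFinset
  have hfcard : Fintype.card (↥(↑(fiber k c) : Set V)) = (fiber k c).card := by
    rw [show Fintype.card (↥(↑(fiber k c) : Set V)) = Fintype.card ↥(fiber k c) from
      Fintype.card_congr (Equiv.subtypeEquivRight (fun x => by simp))]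
    exact Fintype.card_coe _
  have hdeg := SimpleGraph.sum_degrees_eq_twice_card_edges G'
  have hdegree : ∀ x : ↥(↑(fiber k c) : Set V),
      G'.degree x = ((fiber k c).erase ↑x |>.filter
        (fun v => IsBridge k (↑x) v)).card := by
    intro x
    rw [← SimpleGraph.card_neighborFinset_eq_degree]
    refine Finset.card_bij (fun y _ => (y : V)) ?_ ?_ ?_
    · intro y hy
      rw [SimpleGraph.mem_neighborFinset] at hy
      have hadj : (BG k).Adj ↑x ↑y := by exact hy
      rw [Finset.mem_filter, Finset.mem_erase]
      exact ⟨⟨(hadj.ne).symm, by simpa using y.2⟩, BG_adj_bridge hsym hadj⟩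
    · intro y1 _ y2 _ h
      exact Subtype.val_injective h
    · intro v hv
      rw [Finset.mem_filter, Finset.mem_erase] at hv
      refine ⟨⟨v, by simpa using hv.1.2⟩, ?_, rfl⟩
      rw [SimpleGraph.mem_neighborFinset]
      show (BG k).Adj ↑x v
      exact Or.inl hv.2
  have hsum : ∑ x : ↥(↑(fiber k c) : Set V), G'.degree x
      = ∑ u ∈ fiber k c, ∑ v ∈ (fiber k c).erase u,
          (if IsBridge k u v then 1 else 0) := by
    rw [Fintype.sum_congr _ _ hdegree]
    have h1 : ∑ a : ↥(↑(fiber k c) : Set V),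
        (((fiber k c).erase ↑a).filter (fun v => IsBridge k (↑a) v)).card
        = ∑ x : ↥(fiber k c),
        (((fiber k c).erase ↑x).filter (fun v => IsBridge k (↑x) v)).card :=
      Fintype.sum_equiv (Equiv.subtypeEquivRight (fun x => by simp)) _ _ (fun a => rfl)
    rw [h1, Finset.sum_coe_sort (fiber k c)
      (fun u => (((fiber k c).erase u).filter (fun v => IsBridge k u v)).card)]
    exact Finset.sum_congr rfl fun u _ => Finset.card_filter _ _
  omega
end Aux13c

section Aux13d

variable {k : V → V → ℕ} {w : V → ℕ}

lemma numEdges_int {α : Type} [Fintype α] [DecidableEq α] (k' : α → α → ℕ)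
    (hs : ∀ u v, k' u v = k' v u) :
    2 * (numEdges k' : ℤ)
      = 2 * (∑ v, (k' v v : ℤ)) + ∑ u, ∑ v ∈ Finset.univ.erase u, (k' u v : ℤ) := by
  obtain ⟨t, ht⟩ := even_pair_sum k' hs Finset.univ
  have h1 : (∑ u, ∑ v ∈ Finset.univ.erase u, (k' u v : ℤ)) = 2 * (t : ℤ) := by
    have h2 := congrArg (Nat.cast (R := ℤ)) ht
    push_cast at h2
    exact h2
  rw [h1]
  unfold numEdges
  rw [ht, Nat.mul_div_cancel_left t (by norm_num : 0 < 2)]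
  push_cast
  ring

lemma wA_univ_expand {α : Type} [Fintype α] [DecidableEq α] (k' : α → α → ℕ)
    (w' : α → ℕ) :
    wA k' w' Finset.univ
      = 2 * (∑ v, (w' v : ℤ)) - 2 * (Fintype.card α : ℤ) + 2 * (∑ v, (k' v v : ℤ))
        + ∑ x, ∑ y ∈ Finset.univ.erase x, (k' y x : ℤ) := by
  unfold wA
  rw [Finset.sum_add_distrib, Finset.sum_add_distrib, Finset.sum_sub_distrib,
    Finset.sum_const, Finset.card_univ, ← Finset.mul_sum, ← Finset.mul_sum]
  push_cast
  ring

lemma wA_univ_eq_s13 {α : Type} [Fintype α] [DecidableEq α] (k' : α → α → ℕ) (w' : α → ℕ)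
    (hs : ∀ u v, k' u v = k' v u) :
    wA k' w' Finset.univ = 2 * genus k' w' - 2 := by
  have hnum := numEdges_int k' hs
  rw [wA_univ_expand k' w']
  have etrans : (∑ x, ∑ y ∈ Finset.univ.erase x, (k' y x : ℤ))
      = ∑ u, ∑ v ∈ Finset.univ.erase u, (k' u v : ℤ) := by
    rw [sum_pairs_comm Finset.univ (fun x y => (k' y x : ℤ))]
  rw [etrans]
  unfold genus
  push_cast
  linarith [hnum]

lemma k2_symm (hsym : ∀ u v, k u v = k v u) (c c' : V2 k) : k2 k c c' = k2 k c' c := by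
  unfold k2
  by_cases h : c = c'
  · subst h; rfl
  · rw [if_neg h, if_neg (Ne.symm h), Finset.sum_comm]
    exact Finset.sum_congr rfl fun u _ => Finset.sum_congr rfl fun v _ => hsym v u

lemma bridge_count (hsym : ∀ u v, k u v = k v u) (hconn : (graphOf k).Connected) :
    2 * Fintype.card V
      = (∑ u, ∑ v ∈ Finset.univ.erase u, if IsBridge k u v then 1 else 0)
        + 2 * Fintype.card (V2 k) := by
  have hcV : Fintype.card V = ∑ c : V2 k, (fiber k c).card := by
    rw [← Finset.card_univ, Finset.card_eq_sum_ones, ← sum_fibers k (fun _ => 1)]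
    exact Finset.sum_congr rfl fun c _ => (Finset.card_eq_sum_ones _).symm
  calc 2 * Fintype.card V = ∑ c : V2 k, 2 * (fiber k c).card := by
        rw [hcV, Finset.mul_sum]
    _ = ∑ c : V2 k, ((∑ u ∈ fiber k c, ∑ v ∈ (fiber k c).erase u,
          if IsBridge k u v then 1 else 0) + 2) :=
        Finset.sum_congr rfl fun c _ => fiber_card hsym hconn c
    _ = (∑ c : V2 k, ∑ u ∈ fiber k c, ∑ v ∈ (fiber k c).erase u,
          if IsBridge k u v then 1 else 0) + 2 * Fintype.card (V2 k) := by
        rw [Finset.sum_add_distrib]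
        congr 1
        simp [Finset.sum_const, Finset.card_univ, mul_comm]
    _ = (∑ u, ∑ v ∈ Finset.univ.erase u, if IsBridge k u v then 1 else 0)
          + 2 * Fintype.card (V2 k) := by
        rw [sum_fiber_pairs k (fun u v => if IsBridge k u v then 1 else 0)]
        congr 1
        refine Finset.sum_congr rfl fun u _ => Finset.sum_congr rfl fun v _ => ?_
        by_cases hb : IsBridge k u v
        · rw [if_pos hb, if_pos (quot_eq_of_bridge hb).symm]
        · rw [if_neg hb]
          by_cases hq : Quotient.mk (contractSetoid k) v = Quotient.mk (contractSetoid k) u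
            <;> simp [hq, hb]

lemma wA_univ_contract (hsym : ∀ u v, k u v = k v u)
    (hconn : (graphOf k).Connected) :
    wA (k2 k) (w2 k w) Finset.univ = wA k w Finset.univ := by
  rw [wA_univ_expand (k2 k) (w2 k w), wA_univ_expand k w]
  -- A1 : weights agree
  have hA1 : (∑ c, (w2 k w c : ℤ)) = ∑ v, (w v : ℤ) := by
    rw [← sum_fibers k (fun v => (w v : ℤ))]
    refine Finset.sum_congr rfl fun c _ => ?_
    unfold w2
    push_cast
    rfl
  -- A2 : loops
  have hA2 : 2 * (∑ c, (k2 k c c : ℤ))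
      = 2 * (∑ v, (k v v : ℤ))
        + ∑ u, ∑ v ∈ Finset.univ.erase u,
            (if Quotient.mk (contractSetoid k) v = Quotient.mk (contractSetoid k) u
              then (if IsBridge k u v then 0 else (k u v : ℤ)) else 0) := by
    have hsnb : ∀ u v : V, (if IsBridge k u v then 0 else k u v)
        = (if IsBridge k v u then 0 else k v u) := by
      intro u v
      by_cases hb : IsBridge k u v
      · rw [if_pos hb, if_pos (isBridge_symm hsym hb)]
      · rw [if_neg hb, if_neg (fun h => hb (isBridge_symm hsym h)), hsym u v]
    have hper : ∀ c : V2 k, 2 * k2 k c c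
        = 2 * (∑ v ∈ fiber k c, k v v)
          + ∑ u ∈ fiber k c, ∑ v ∈ (fiber k c).erase u,
              (if IsBridge k u v then 0 else k u v) := by
      intro c
      obtain ⟨t, ht⟩ := even_pair_sum (fun u v => if IsBridge k u v then 0 else k u v)
        hsnb (fiber k c)
      unfold k2
      rw [if_pos rfl, ht, Nat.mul_div_cancel_left t (by norm_num : 0 < 2)]
      ring
    have hsumc : 2 * (∑ c, k2 k c c)
        = 2 * (∑ c : V2 k, ∑ v ∈ fiber k c, k v v)
          + ∑ c : V2 k, ∑ u ∈ fiber k c, ∑ v ∈ (fiber k c).erase u,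
              (if IsBridge k u v then 0 else k u v) := by
      rw [Finset.mul_sum, Finset.sum_congr rfl fun c _ => hper c,
        Finset.sum_add_distrib, ← Finset.mul_sum]
    rw [sum_fibers k (fun v => k v v),
      sum_fiber_pairs k (fun u v => if IsBridge k u v then 0 else k u v)] at hsumc
    have := congrArg (Nat.cast (R := ℤ)) hsumc
    push_cast at this
    convert this using 3 <;> push_cast <;> ring_nf
  -- A3 : cross edges
  have hA3 : (∑ c, ∑ c' ∈ Finset.univ.erase c, (k2 k c' c : ℤ))
      = ∑ u, ∑ v ∈ Finset.univ.erase u,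
          (if Quotient.mk (contractSetoid k) v = Quotient.mk (contractSetoid k) u
            then 0 else (k u v : ℤ)) := by
    rw [← sum_cross_pairs k (fun u v => (k u v : ℤ))]
    refine Finset.sum_congr rfl fun c _ => Finset.sum_congr rfl fun c' hc' => ?_
    have hne : c' ≠ c := (Finset.mem_erase.mp hc').1
    unfold k2
    rw [if_neg hne]
    push_cast
    rfl
  -- merge the two ite-sums
  have hmerge : (∑ u, ∑ v ∈ Finset.univ.erase u,
        (if Quotient.mk (contractSetoid k) v = Quotient.mk (contractSetoid k) u
          then (if IsBridge k u v then 0 else (k u v : ℤ)) else 0))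
      + (∑ u, ∑ v ∈ Finset.univ.erase u,
        (if Quotient.mk (contractSetoid k) v = Quotient.mk (contractSetoid k) u
          then 0 else (k u v : ℤ)))
      = ∑ u, ∑ v ∈ Finset.univ.erase u, (if IsBridge k u v then 0 else (k u v : ℤ)) := by
    rw [← Finset.sum_add_distrib]
    refine Finset.sum_congr rfl fun u _ => ?_
    rw [← Finset.sum_add_distrib]
    refine Finset.sum_congr rfl fun v _ => ?_
    by_cases hq : Quotient.mk (contractSetoid k) v = Quotient.mk (contractSetoid k) u
    · rw [if_pos hq, if_pos hq, add_zero]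
    · rw [if_neg hq, if_neg hq, zero_add]
      have hb : ¬ IsBridge k u v := fun h => hq (quot_eq_of_bridge h).symm
      rw [if_neg hb]
  -- non-bridge sum plus bridge sum equals total
  have hnb : (∑ u, ∑ v ∈ Finset.univ.erase u, (if IsBridge k u v then 0 else (k u v : ℤ)))
        + (∑ u, ∑ v ∈ Finset.univ.erase u, (if IsBridge k u v then (1 : ℤ) else 0))
      = ∑ u, ∑ v ∈ Finset.univ.erase u, (k u v : ℤ) := by
    rw [← Finset.sum_add_distrib]
    refine Finset.sum_congr rfl fun u _ => ?_
    rw [← Finset.sum_add_distrib]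
    refine Finset.sum_congr rfl fun v _ => ?_
    by_cases hb : IsBridge k u v
    · rw [if_pos hb, if_pos hb, zero_add, hb.2.1]
      norm_num
    · rw [if_neg hb, if_neg hb, add_zero]
  -- cast the vertex count
  have hcount : 2 * (Fintype.card V : ℤ)
      = (∑ u, ∑ v ∈ Finset.univ.erase u, (if IsBridge k u v then (1 : ℤ) else 0))
        + 2 * (Fintype.card (V2 k) : ℤ) := by
    have h := congrArg (Nat.cast (R := ℤ)) (bridge_count hsym hconn)
    push_cast at h
    linarith [h]
  -- the diagonal terms: same k, same w sums
  have hkk : ∀ x : V, ∀ y ∈ Finset.univ.erase x, (k y x : ℤ) = (k x y : ℤ) := by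
    intro x y _
    rw [hsym y x]
  rw [Finset.sum_congr rfl fun x _ => Finset.sum_congr rfl (hkk x)]
  linarith [hA1, hA2, hA3, hmerge, hnb, hcount]

lemma genus_contract (hsym : ∀ u v, k u v = k v u)
    (hconn : (graphOf k).Connected) :
    genus (k2 k) (w2 k w) = genus k w := by
  have h1 := wA_univ_eq_s13 (k2 k) (w2 k w) (k2_symm hsym)
  have h2 := wA_univ_eq_s13 k w hsym
  have h3 := wA_univ_contract (k := k) (w := w) hsym hconn
  linarith

end Aux13d

section Aux13e

lemma erase_split_sum {α M : Type} [Fintype α] [DecidableEq α] [AddCommMonoid M]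
    {A : Finset α} {c : α} (hc : c ∈ A) (f : α → M) :
    ∑ x ∈ Finset.univ.erase c, f x = (∑ x ∈ A.erase c, f x) + ∑ x ∈ Aᶜ, f x := by
  rw [← Finset.sum_union (Finset.disjoint_left.mpr
    (fun x hx hx' => (Finset.mem_compl.mp hx') (Finset.mem_of_mem_erase hx)))]
  congr 1
  ext x
  simp only [Finset.mem_erase, Finset.mem_union, Finset.mem_compl, Finset.mem_univ,
    and_true, true_and]
  constructor
  · intro hx
    by_cases hA : x ∈ A
    · exact Or.inl ⟨hx, hA⟩
    · exact Or.inr hA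
  · rintro (⟨hx, -⟩ | hx)
    · exact hx
    · intro he; rw [he] at hx; exact hx hc

lemma not_dgeneral {α : Type} [Fintype α] [DecidableEq α] (K : α → α → ℕ) (W : α → ℕ)
    (hs : ∀ u v, K u v = K v u) (g : ℤ) (hgen : genus K W = g) (hg : 2 ≤ g)
    (c₀ c₁ : α) (hne01 : c₀ ≠ c₁) : ¬ IsDGeneral K W (g - 1) := by
  classical
  set r : α → ℕ := fun c => if c = c₀ then 0 else (Fintype.equivFin α c).val + 1 with hr
  have hrc₀ : r c₀ = 0 := by rw [hr]; simp
  have hrinj : Function.Injective r := by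
    intro a b hab
    by_cases ha : a = c₀ <;> by_cases hb : b = c₀
    · rw [ha, hb]
    · exfalso; rw [hr] at hab; simp only [if_pos ha, if_neg hb] at hab; omega
    · exfalso; rw [hr] at hab; simp only [if_neg ha, if_pos hb] at hab; omega
    · rw [hr] at hab; simp only [if_neg ha, if_neg hb] at hab
      exact (Fintype.equivFin α).injective (Fin.ext (by omega))
  set d : α → ℤ := fun c => (W c : ℤ) - 1 + (K c c : ℤ)
      + ∑ x ∈ Finset.univ.erase c, (if r x < r c then (K x c : ℤ) else 0) with hd
  set mInt : Finset α → ℤ := fun A =>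
      (∑ c ∈ A, ((W c : ℤ) - 1 + (K c c : ℤ)))
        + ∑ c ∈ A, ∑ x ∈ A.erase c, (if r x < r c then (K x c : ℤ) else 0) with hmI
  have key : ∀ A : Finset α, wA K W A = 2 * mInt A + deltaA K A := by
    intro A
    have e1 : wA K W A = (∑ c ∈ A, (2 * (W c : ℤ) - 2 + 2 * (K c c : ℤ)))
        + ((∑ c ∈ A, ∑ x ∈ A.erase c, (K x c : ℤ))
          + ∑ c ∈ A, ∑ x ∈ Aᶜ, (K x c : ℤ)) := by
      unfold wA
      rw [Finset.sum_add_distrib]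
      congr 1
      rw [Finset.sum_congr rfl (fun c hc => erase_split_sum hc (fun x => (K x c : ℤ)))]
      rw [Finset.sum_add_distrib]
    have e2 : deltaA K A = ∑ c ∈ A, ∑ x ∈ Aᶜ, (K x c : ℤ) := by
      unfold deltaA
      refine Finset.sum_congr rfl fun c _ => Finset.sum_congr rfl fun x _ => ?_
      rw [hs c x]
    have e3 : (∑ c ∈ A, ∑ x ∈ A.erase c, (K x c : ℤ))
        = 2 * ∑ c ∈ A, ∑ x ∈ A.erase c, (if r x < r c then (K x c : ℤ) else 0) := by
      rw [sum_pairs_split r hrinj A (fun c x => (K x c : ℤ)), two_mul]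
      congr 1
      refine Finset.sum_congr rfl fun c _ => Finset.sum_congr rfl fun x _ => ?_
      by_cases h : r x < r c <;> simp [h, hs]
    have e4 : (∑ c ∈ A, (2 * (W c : ℤ) - 2 + 2 * (K c c : ℤ)))
        = 2 * ∑ c ∈ A, ((W c : ℤ) - 1 + (K c c : ℤ)) := by
      rw [Finset.mul_sum]
      exact Finset.sum_congr rfl fun c _ => by ring
    rw [e1, e2, e3, e4]
    simp only [hmI]
    ring
  have hne2g : ((2 * g - 2 : ℤ) : ℚ) ≠ 0 := by
    have : (2 * g - 2 : ℤ) ≠ 0 := by omega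
    exact_mod_cast this
  have hM1 : ∀ A : Finset α, mA K W (g - 1) A = ((mInt A : ℤ) : ℚ) := by
    intro A
    have h1 : ((2 * g - 2 : ℤ) : ℚ) = ((g - 1 : ℤ) : ℚ) * 2 := by push_cast; ring
    have h2 : ((g - 1 : ℤ) : ℚ) ≠ 0 := by
      apply ne_of_gt
      have hgq : (2:ℚ) ≤ (g:ℚ) := by exact_mod_cast hg
      push_cast
      linarith
    unfold mA
    rw [hgen, key A, h1, mul_div_mul_left _ _ h2]
    push_cast
    ring
  have hdeg : ∀ A : Finset α, degA d A
      = mInt A + ∑ c ∈ A, ∑ x ∈ Aᶜ, (if r x < r c then (K x c : ℤ) else 0) := by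
    intro A
    have hdc : ∀ c ∈ A, d c = ((W c : ℤ) - 1 + (K c c : ℤ))
        + ((∑ x ∈ A.erase c, (if r x < r c then (K x c : ℤ) else 0))
          + ∑ x ∈ Aᶜ, (if r x < r c then (K x c : ℤ) else 0)) := by
      intro c hc
      rw [hd]
      simp only []
      rw [erase_split_sum hc (fun x => (if r x < r c then (K x c : ℤ) else 0))]
      try ring
    unfold degA
    rw [Finset.sum_congr rfl hdc, Finset.sum_add_distrib]
    simp only [hmI]
    rw [add_assoc]
    congr 1
    exact Finset.sum_add_distrib
  have hnonneg : ∀ A : Finset α,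
      0 ≤ ∑ c ∈ A, ∑ x ∈ Aᶜ, (if r x < r c then (K x c : ℤ) else 0) := by
    intro A
    refine Finset.sum_nonneg fun c _ => Finset.sum_nonneg fun x _ => ?_
    by_cases h : r x < r c <;> simp [h]
  have hdeguniv : degA d Finset.univ = mInt Finset.univ := by
    rw [hdeg Finset.univ, Finset.compl_univ]
    simp
  have hdelta0 : deltaA K Finset.univ = 0 := by
    unfold deltaA
    rw [Finset.compl_univ]
    simp
  have hwAuniv : wA K W Finset.univ = 2 * g - 2 := by
    rw [wA_univ_eq_s13 K W hs, hgen]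
  have hMuniv : mA K W (g - 1) Finset.univ = ((g - 1 : ℤ) : ℚ) := by
    unfold mA
    rw [hgen, hwAuniv, hdelta0, mul_div_assoc, div_self hne2g]
    push_cast
    ring
  have hmIuniv : mInt Finset.univ = g - 1 := by
    have h := (hM1 Finset.univ).symm.trans hMuniv
    exact_mod_cast h
  have hbal : IsBalanced K W (g - 1) d := by
    constructor
    · exact hdeguniv.trans hmIuniv
    · intro A
      rw [hM1 A]
      have h1 : mInt A ≤ degA d A := by
        rw [hdeg A]
        linarith [hnonneg A]
      exact_mod_cast h1
  have hsing : degA d {c₀} = mInt {c₀} := by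
    rw [hdeg {c₀}]
    have hz : ∑ c ∈ ({c₀} : Finset α), ∑ x ∈ ({c₀} : Finset α)ᶜ,
        (if r x < r c then (K x c : ℤ) else 0) = 0 := by
      rw [Finset.sum_singleton]
      refine Finset.sum_eq_zero fun x _ => ?_
      rw [hrc₀, if_neg (Nat.not_lt_zero _)]
    rw [hz, add_zero]
  intro hDG
  have hstrict := hDG d hbal
  have hlt := hstrict.2 {c₀} (by simp)
    (fun h => hne01 (by
      have : c₁ ∈ ({c₀} : Finset α) := h ▸ Finset.mem_univ c₁
      exact (Finset.mem_singleton.mp this).symm))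
  rw [hM1 {c₀}, ← hsing] at hlt
  exact lt_irrefl _ hlt

end Aux13e

/-- `(Γ,w)` is weakly `(g−1)`-general iff `Γ` is tree-like. -/
theorem stmt13 (V : Type) [Fintype V] [DecidableEq V] (k : V → V → ℕ) (w : V → ℕ)
    (hsym : ∀ u v, k u v = k v u) (hstab : IsStable k w) (hg : 2 ≤ genus k w) :
    IsDGeneral (k2 k) (w2 k w) (genus k w - 1) ↔
      ∀ u v : V, u ≠ v → 0 < k u v → IsBridge k u v := by
  obtain ⟨hconn, hval⟩ := hstab
  constructor
  · intro hDG
    by_contra hnt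
    push_neg at hnt
    obtain ⟨u, v, hne, hk, hnb⟩ := hnt
    have hc01 := quot_ne_of_adj_not_bridge hsym hconn hne hk hnb
    exact not_dgeneral (k2 k) (w2 k w) (k2_symm hsym) (genus k w)
      (genus_contract hsym hconn) hg _ _ hc01 hDG
  · intro htree d hbal
    refine ⟨hbal, fun A hAne hAuniv => absurd ?_ hAuniv⟩
    obtain ⟨a, ha⟩ := Finset.nonempty_of_ne_empty hAne
    ext x
    simp only [Finset.mem_univ, iff_true]
    rw [v2_eq_of_treelike hconn htree x a]
    exact ha
end
end

section
/- Fix an integer g ≥ 2 and an integer d. Then gcd(d−g+1, 2g−2) = 1 if and only if no stable vine graph of genus g is d-special. Moreover, if some stable vine graph of genus g is d-special, then there exists a d-special stable vine graph of genus g with δ = 2 or δ = 3 edges. -/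
open Finset

noncomputable section
open scoped Classical

variable {V : Type} [Fintype V] [DecidableEq V]

section Aux

lemma vine_genus (g1 g2 δ : ℕ) :
    genus (vineK δ) (vineW g1 g2) = (g1 : ℤ) + g2 + δ - 1 := by
  have e0 : (Finset.univ.erase (0 : Fin 2)) = {1} := by decide
  have e1 : (Finset.univ.erase (1 : Fin 2)) = {0} := by decide
  have hn : numEdges (vineK δ) = δ := by
    simp [numEdges, vineK, Fin.sum_univ_two, e0, e1]
    omega
  simp [genus, hn, vineW, Fin.sum_univ_two]
  ring

lemma finset_fin2 (A : Finset (Fin 2)) :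
    A = ∅ ∨ A = {0} ∨ A = {1} ∨ A = Finset.univ := by
  revert A; decide

lemma vine_special_iff (g d : ℤ) (g1 g2 δ : ℕ) (hg : 2 ≤ g) (hδ : 2 ≤ δ)
    (hgen : (g1 : ℤ) + g2 + δ - 1 = g) :
    ¬ IsDGeneral (vineK δ) (vineW g1 g2) d ↔
      (2 * g - 2) ∣ (d - g + 1) * (2 * (g1 : ℤ) + δ - 2) := by
  subst hgen
  have e0 : (Finset.univ.erase (0 : Fin 2)) = {1} := by decide
  have e1 : (Finset.univ.erase (1 : Fin 2)) = {0} := by decide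
  have c0 : ({0} : Finset (Fin 2))ᶜ = {1} := by decide
  have c1 : ({1} : Finset (Fin 2))ᶜ = {0} := by decide
  have hgenus : genus (vineK δ) (vineW g1 g2) = (g1 : ℤ) + g2 + δ - 1 :=
    vine_genus g1 g2 δ
  have hwA0 : wA (vineK δ) (vineW g1 g2) {0} = 2 * (g1 : ℤ) + δ - 2 := by
    simp [wA, e0, vineK, vineW]; ring
  have hwA1 : wA (vineK δ) (vineW g1 g2) {1} = 2 * (g2 : ℤ) + δ - 2 := by
    simp [wA, e1, vineK, vineW]; ring
  have hwAu : wA (vineK δ) (vineW g1 g2) Finset.univ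
      = 2 * ((g1 : ℤ) + g2 + δ - 1) - 2 := by
    simp [wA, Fin.sum_univ_two, e0, e1, vineK, vineW]; ring
  have hdA0 : deltaA (vineK δ) {0} = (δ : ℤ) := by
    simp [deltaA, c0, vineK]
  have hdA1 : deltaA (vineK δ) {1} = (δ : ℤ) := by
    simp [deltaA, c1, vineK]
  have hdAu : deltaA (vineK δ) Finset.univ = 0 := by
    simp [deltaA]
  have hNpos : (0 : ℤ) < 2 * ((g1 : ℤ) + g2 + δ - 1) - 2 := by omega
  have hNQ : ((2 * ((g1 : ℤ) + g2 + δ - 1) - 2 : ℤ) : ℚ) ≠ 0 := by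
    exact_mod_cast hNpos.ne'
  constructor
  · intro hnot
    rw [IsDGeneral] at hnot
    push_neg at hnot
    obtain ⟨dd, hbal, hnst⟩ := hnot
    rw [IsStrictlyBalanced] at hnst
    push_neg at hnst
    obtain ⟨A, hA1, hA2, hA3⟩ := hnst hbal
    have heq : mA (vineK δ) (vineW g1 g2) d A = (degA dd A : ℚ) :=
      le_antisymm (hbal.2 A) hA3
    rcases finset_fin2 A with h | h | h | h
    · exact absurd h hA1.ne_empty
    · subst h
      rw [mA, hgenus, hwA0, hdA0] at heq
      have hdeg : degA dd {0} = dd 0 := by simp [degA]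
      rw [hdeg, sub_eq_iff_eq_add, div_eq_iff hNQ] at heq
      push_cast at heq
      refine ⟨dd 0 + 1 - g1, ?_⟩
      have hq : (((d - ((g1 : ℤ) + g2 + δ - 1) + 1) * (2 * (g1 : ℤ) + δ - 2) : ℤ) : ℚ)
          = (((2 * ((g1 : ℤ) + g2 + δ - 1) - 2) * (dd 0 + 1 - g1) : ℤ) : ℚ) := by
        push_cast
        linear_combination heq
      exact_mod_cast hq
    · subst h
      rw [mA, hgenus, hwA1, hdA1] at heq
      have hdeg : degA dd {1} = dd 1 := by simp [degA]
      rw [hdeg, sub_eq_iff_eq_add, div_eq_iff hNQ] at heq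
      push_cast at heq
      have hd1 : (2 * ((g1 : ℤ) + g2 + δ - 1) - 2)
          ∣ (d - ((g1 : ℤ) + g2 + δ - 1) + 1) * (2 * (g2 : ℤ) + δ - 2) := by
        refine ⟨dd 1 + 1 - g2, ?_⟩
        have hq : (((d - ((g1 : ℤ) + g2 + δ - 1) + 1) * (2 * (g2 : ℤ) + δ - 2) : ℤ) : ℚ)
            = (((2 * ((g1 : ℤ) + g2 + δ - 1) - 2) * (dd 1 + 1 - g2) : ℤ) : ℚ) := by
          push_cast
          linear_combination heq
        exact_mod_cast hq
      have key : (d - ((g1 : ℤ) + g2 + δ - 1) + 1) * (2 * (g1 : ℤ) + δ - 2)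
          = (d - ((g1 : ℤ) + g2 + δ - 1) + 1) * (2 * ((g1 : ℤ) + g2 + δ - 1) - 2)
            - (d - ((g1 : ℤ) + g2 + δ - 1) + 1) * (2 * (g2 : ℤ) + δ - 2) := by
        ring
      rw [key]
      exact dvd_sub (dvd_mul_left _ _) hd1
    · exact absurd h hA2
  · rintro ⟨c, hc⟩
    have hcQ : ((d : ℚ) - ((g1 : ℚ) + g2 + δ - 1) + 1) * (2 * (g1 : ℚ) + δ - 2)
        = (2 * ((g1 : ℚ) + g2 + δ - 1) - 2) * (c : ℚ) := by
      exact_mod_cast congrArg (fun x : ℤ => (x : ℚ)) hc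
    set d0 : ℤ := c + g1 - 1 with hd0def
    set dd : Fin 2 → ℤ := fun i => if i = 0 then d0 else d - d0 with hdddef
    have hdd0 : dd 0 = d0 := by simp [hdddef]
    have hdd1 : dd 1 = d - d0 := by simp [hdddef]
    have hq0 : mA (vineK δ) (vineW g1 g2) d {0} = (d0 : ℚ) := by
      rw [mA, hgenus, hwA0, hdA0, sub_eq_iff_eq_add, div_eq_iff hNQ, hd0def]
      push_cast
      linear_combination hcQ
    have hq1 : mA (vineK δ) (vineW g1 g2) d {1} = (d : ℚ) - d0 - δ := by
      rw [mA, hgenus, hwA1, hdA1, sub_eq_iff_eq_add, div_eq_iff hNQ, hd0def]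
      push_cast
      linear_combination -hcQ
    have hqu : mA (vineK δ) (vineW g1 g2) d Finset.univ = (d : ℚ) := by
      rw [mA, hgenus, hwAu, hdAu]
      rw [mul_div_assoc, div_self hNQ, mul_one]
      norm_num
    have hqe : mA (vineK δ) (vineW g1 g2) d ∅ = 0 := by
      simp [mA, wA, deltaA]
    have hbal : IsBalanced (vineK δ) (vineW g1 g2) d dd := by
      constructor
      · have : degA dd Finset.univ = dd 0 + dd 1 := by
          simp [degA, Fin.sum_univ_two]
        rw [this, hdd0, hdd1]; ring
      · intro A
        rcases finset_fin2 A with h | h | h | h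
        · subst h; rw [hqe]; simp [degA]
        · subst h
          have hdeg : degA dd {0} = d0 := by simp [degA, hdd0]
          rw [hq0, hdeg]
        · subst h
          have hdeg : degA dd {1} = d - d0 := by simp [degA, hdd1]
          rw [hq1, hdeg]
          have : (2 : ℚ) ≤ (δ : ℚ) := by exact_mod_cast hδ
          push_cast
          linarith
        · subst h
          have hdeg : degA dd Finset.univ = d := by
            simp [degA, Fin.sum_univ_two, hdd0, hdd1]
          rw [hqu, hdeg]
    intro hgenl
    have hstrict := (hgenl dd hbal).2 {0} (by decide) (by decide)
    rw [hq0] at hstrict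
    have hdeg : degA dd {0} = d0 := by simp [degA, hdd0]
    rw [hdeg] at hstrict
    exact lt_irrefl _ hstrict

lemma gcd_ne_one_of_special (g d : ℤ) (g1 g2 δ : ℕ) (hg : 2 ≤ g)
    (hsv : StableVine g g1 g2 δ)
    (hdvd : (2 * g - 2) ∣ (d - g + 1) * (2 * (g1 : ℤ) + δ - 2)) :
    Int.gcd (d - g + 1) (2 * g - 2) ≠ 1 := by
  obtain ⟨hδ, hst, hgen⟩ := hsv
  intro h1
  have hcop : Int.gcd (2 * g - 2) (d - g + 1) = 1 := by
    rwa [Int.gcd_comm]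
  have hdvd' : (2 * g - 2) ∣ (2 * (g1 : ℤ) + δ - 2) :=
    Int.dvd_of_dvd_mul_right_of_gcd_one hdvd hcop
  have hpos : (0 : ℤ) < 2 * (g1 : ℤ) + δ - 2 := by
    rcases Nat.eq_zero_or_pos g1 with h | h
    · have := hst (Or.inl h); omega
    · omega
  have hle := Int.le_of_dvd hpos hdvd'
  have hub : 2 * (g1 : ℤ) + δ - 2 ≤ 2 * g - 3 := by
    rcases Nat.eq_zero_or_pos g2 with h | h
    · have := hst (Or.inr h); omega
    · omega
  omega

lemma construct_special (g d : ℤ) (hg : 2 ≤ g)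
    (hne : Int.gcd (d - g + 1) (2 * g - 2) ≠ 1) :
    ∃ g1 g2 δ : ℕ, StableVine g g1 g2 δ ∧ (δ = 2 ∨ δ = 3) ∧
      (2 * g - 2) ∣ (d - g + 1) * (2 * (g1 : ℤ) + δ - 2) := by
  set e : ℤ := d - g + 1 with he
  set N : ℤ := 2 * g - 2 with hNdef
  have hNpos : (0 : ℤ) < N := by omega
  set m : ℕ := Int.gcd e N with hm
  have hm0 : m ≠ 0 := by
    intro h
    have := Int.gcd_eq_zero_iff.mp h
    omega
  have hm2 : 2 ≤ m := by
    rcases Nat.lt_or_ge m 2 with h | h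
    · interval_cases m
      · exact absurd rfl hm0
      · exact absurd rfl hne
    · exact h
  have hmN : (m : ℤ) ∣ N := Int.gcd_dvd_right e N
  have hme : (m : ℤ) ∣ e := Int.gcd_dvd_left e N
  obtain ⟨n, hn⟩ := hmN
  have hnpos : 0 < n := by
    by_contra h
    push_neg at h
    nlinarith [hn, hNpos, (by exact_mod_cast hm0.bot_lt : (0:ℤ) < (m:ℤ))]
  have hnle : n ≤ g - 1 := by
    nlinarith [hn, (by exact_mod_cast hm2 : (2:ℤ) ≤ (m:ℤ)), hnpos]
  have hdvdn : N ∣ e * n := by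
    obtain ⟨e', he'⟩ := hme
    exact ⟨e', by rw [hn, he']; ring⟩
  rcases Int.even_or_odd n with ⟨t, ht⟩ | ⟨t, ht⟩
  · -- n = 2t, use δ = 2, g1 = t, g2 = g - 1 - t
    have ht1 : 1 ≤ t := by omega
    have ht2 : t ≤ g - 1 - t := by omega
    refine ⟨t.toNat, (g - 1 - t).toNat, 2, ⟨by norm_num, ?_, ?_⟩, Or.inl rfl, ?_⟩
    · intro hor
      rcases hor with h | h
      · exfalso; omega
      · exfalso; omega
    · push_cast [Int.toNat_of_nonneg (by omega : (0:ℤ) ≤ t),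
        Int.toNat_of_nonneg (by omega : (0:ℤ) ≤ g - 1 - t)]
      ring
    · have hw : 2 * ((t.toNat : ℤ)) + (2 : ℕ) - 2 = n := by
        rw [Int.toNat_of_nonneg (by omega : (0:ℤ) ≤ t)]
        push_cast
        omega
      rw [hw]
      exact hdvdn
  · -- n = 2t + 1, use δ = 3, g1 = t, g2 = g - 2 - t
    have ht0 : 0 ≤ t := by omega
    have ht2 : 0 ≤ g - 2 - t := by omega
    refine ⟨t.toNat, (g - 2 - t).toNat, 3, ⟨by norm_num, fun _ => le_refl 3, ?_⟩,
      Or.inr rfl, ?_⟩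
    · push_cast [Int.toNat_of_nonneg ht0, Int.toNat_of_nonneg ht2]
      ring
    · have hw : 2 * ((t.toNat : ℤ)) + (3 : ℕ) - 2 = n := by
        rw [Int.toNat_of_nonneg ht0]
        push_cast
        omega
      rw [hw]
      exact hdvdn

end Aux

/-- `gcd(d−g+1, 2g−2) = 1` iff no stable vine graph of genus `g`
is `d`-special; moreover if some stable vine graph of genus `g` is `d`-special
then one with `δ = 2` or `δ = 3` edges is. -/
theorem stmt14 (g d : ℤ) (hg : 2 ≤ g) :
    (Int.gcd (d - g + 1) (2 * g - 2) = 1 ↔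
      ∀ g1 g2 δ : ℕ, StableVine g g1 g2 δ → IsDGeneral (vineK δ) (vineW g1 g2) d) ∧
    ((∃ g1 g2 δ : ℕ, StableVine g g1 g2 δ ∧ ¬ IsDGeneral (vineK δ) (vineW g1 g2) d) →
      ∃ g1 g2 δ : ℕ, StableVine g g1 g2 δ ∧ (δ = 2 ∨ δ = 3) ∧
        ¬ IsDGeneral (vineK δ) (vineW g1 g2) d) := by
  have main : Int.gcd (d - g + 1) (2 * g - 2) = 1 ↔
      ∀ g1 g2 δ : ℕ, StableVine g g1 g2 δ → IsDGeneral (vineK δ) (vineW g1 g2) d := by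
    constructor
    · intro h1 g1 g2 δ hsv
      by_contra hnot
      have hdvd := (vine_special_iff g d g1 g2 δ hg hsv.1 hsv.2.2).mp hnot
      exact gcd_ne_one_of_special g d g1 g2 δ hg hsv hdvd h1
    · intro hall
      by_contra hne
      obtain ⟨g1, g2, δ, hsv, _, hdvd⟩ := construct_special g d hg hne
      exact (vine_special_iff g d g1 g2 δ hg hsv.1 hsv.2.2).mpr hdvd
        (hall g1 g2 δ hsv)
  refine ⟨main, ?_⟩
  rintro ⟨g1, g2, δ, hsv, hnot⟩
  have hne : Int.gcd (d - g + 1) (2 * g - 2) ≠ 1 := by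
    intro h1
    exact hnot (main.mp h1 g1 g2 δ hsv)
  obtain ⟨g1', g2', δ', hsv', hδ', hdvd'⟩ := construct_special g d hg hne
  exact ⟨g1', g2', δ', hsv', hδ',
    (vine_special_iff g d g1' g2' δ' hg hsv'.1 hsv'.2.2).mpr hdvd'⟩
end
end
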